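/- arXiv:0911.2966 — 5 statements merged into one kernel-verified Lean document; each statement's English description precedes it below -/
import Mathlib

section
/- Let G be a finite abelian group of rank r with a standard generating set {e_1, ..., e_r} of type (m_1, ..., m_r), and let A_0 = {0, a_1, ..., a_r} where for each i ∈ [1,r] either a_i = e_i or a_i = e_i + a_{σ(i)} with σ(i) ∈ [i+1, r]. Then every g ∈ G can be uniquely written as g = Σ_{i=1}^r λ_i a_i with λ_i ∈ [0, m_i - 1], and the minimal number of elements of A needed to represent g as a sum equals Σ_{i=1}^r λ_i. -/
open Pointwise

variable {G : Type*}

/-- The `n`-fold iterated sumset of a set `A` (with `0` summands giving `{0}`). -/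
def iterSum [AddCommGroup G] (A : Set G) : ℕ → Set G
  | 0 => {0}
  | n + 1 => iterSum A n + A

/-- `A` generates `G` as a group. -/
def Spans [AddCommGroup G] (A : Set G) : Prop := AddSubgroup.closure A = ⊤

/-- The positive diameter of `G` with respect to `A`: the least `n` with
`n·(A ∪ {0}) = G`. -/
noncomputable def diamPlus [AddCommGroup G] (A : Set G) : ℕ :=
  sInf {n : ℕ | iterSum (insert 0 A) n = Set.univ}

/-- The positive length of `g` with respect to `A`. -/
noncomputable def lenPlus [AddCommGroup G] (A : Set G) (g : G) : ℕ :=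
  sInf {n : ℕ | g ∈ iterSum (insert 0 A) n}

/-- The absolute positive diameter of `G`. -/
noncomputable def diamAbs (G : Type*) [AddCommGroup G] : ℕ :=
  sSup {d : ℕ | ∃ A : Set G, Spans A ∧ diamPlus A = d}

/-- `A` is aperiodic: its period (stabilizer) is trivial. -/
def Aperiodic [AddCommGroup G] (A : Set G) : Prop :=
  ∀ g : G, A + {g} = A → g = 0

/-- `A` is `ρ`-maximal: maximal under inclusion subject to `(ρ-1)·(A ∪ {0}) ≠ G`. -/
def RhoMax [AddCommGroup G] (ρ : ℕ) (A : Set G) : Prop :=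
  iterSum (insert 0 A) (ρ - 1) ≠ Set.univ ∧
    ∀ B : Set G, A ⊆ B → iterSum (insert 0 B) (ρ - 1) ≠ Set.univ → B = A

/-- A standard generating set of type `m`. -/
def StandardGen [AddCommGroup G] {r : ℕ} (m : Fin r → ℕ) (e : Fin r → G) : Prop :=
  (∀ i, addOrderOf (e i) = m i) ∧
    ∀ g : G, ∃! lam : Fin r → ℕ, (∀ i, lam i < m i) ∧ g = ∑ i, lam i • e i

noncomputable def tInv (ρ : ℕ) (G : Type*) [AddCommGroup G] : ℕ :=
  sSup {k : ℕ | ∃ A : Set G, Aperiodic A ∧ RhoMax ρ A ∧ Spans A ∧ A.ncard = k}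

noncomputable def sInv (ρ : ℕ) (G : Type*) [AddCommGroup G] : ℕ :=
  sSup {k : ℕ | ∃ A : Set G, Spans A ∧ ρ ≤ diamPlus A ∧ A.ncard = k}

open scoped Classical in
noncomputable def supp2 {G : Type*} [AddCommGroup G] {r : ℕ} (e a : Fin r → G) : Fin r → Finset (Fin r) :=
  fun i =>
    if h : ∃ j, i < j ∧ a i = e i + a j then insert i (supp2 e a h.choose) else {i}
termination_by i => r - i.val
decreasing_by
  have h1 := h.choose_spec.1
  have h2 := h.choose.isLt
  rw [Fin.lt_def] at h1
  omega

section Aux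
variable {G : Type*} [AddCommGroup G] {r : ℕ} (e a : Fin r → G)

lemma le_of_mem_supp2 : ∀ (i j : Fin r), j ∈ supp2 e a i → i ≤ j := by
  intro i j hj
  rw [supp2] at hj
  split at hj
  · rename_i h
    rcases Finset.mem_insert.mp hj with rfl | hj
    · exact le_refl _
    · exact le_of_lt (lt_of_lt_of_le h.choose_spec.1 (le_of_mem_supp2 _ _ hj))
  · simp only [Finset.mem_singleton] at hj
    exact hj ▸ le_refl _
termination_by i => r - i.val
decreasing_by
  rename_i ih h
  have h1 := h.choose_spec.1
  have h2 := h.choose.isLt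
  rw [Fin.lt_def] at h1
  omega

lemma mem_supp2_self (i : Fin r) : i ∈ supp2 e a i := by
  rw [supp2]; split <;> simp

lemma a_eq_sum_supp2 (ha : ∀ i, a i = e i ∨ ∃ j, i < j ∧ a i = e i + a j) :
    ∀ i : Fin r, a i = ∑ j ∈ supp2 e a i, e j := by
  intro i
  rw [supp2]
  split
  · rename_i h
    rw [Finset.sum_insert (fun hmem => absurd (le_of_mem_supp2 e a _ _ hmem)
      (not_le_of_gt h.choose_spec.1))]
    rw [← a_eq_sum_supp2 ha h.choose]
    exact h.choose_spec.2
  · rename_i h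
    rcases ha i with h1 | h2
    · simpa using h1
    · exact absurd h2 h
termination_by i => r - i.val
decreasing_by
  rename_i ih h
  have h1 := h.choose_spec.1
  have h2 := h.choose.isLt
  rw [Fin.lt_def] at h1
  omega

open scoped Classical in
/-- Coefficient of `e j` in `∑ i, lam i • a i`. -/
noncomputable def coef2 (lam : Fin r → ℕ) (j : Fin r) : ℕ :=
  ∑ i ∈ Finset.univ.filter (fun i => j ∈ supp2 e a i), lam i

open scoped Classical in
lemma sum_a_coef2 (ha : ∀ i, a i = e i ∨ ∃ j, i < j ∧ a i = e i + a j) (lam : Fin r → ℕ) :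
    ∑ i, lam i • a i = ∑ j, coef2 e a lam j • e j := by
  unfold coef2
  calc ∑ i, lam i • a i = ∑ i, ∑ j ∈ supp2 e a i, lam i • e j := by
        refine Finset.sum_congr rfl fun i _ => ?_
        rw [a_eq_sum_supp2 e a ha i, Finset.smul_sum]
    _ = ∑ i, ∑ j, if j ∈ supp2 e a i then lam i • e j else 0 := by
        refine Finset.sum_congr rfl fun i _ => ?_
        rw [Finset.sum_ite_mem, Finset.univ_inter]
    _ = ∑ j, ∑ i, if j ∈ supp2 e a i then lam i • e j else 0 := Finset.sum_comm
    _ = ∑ j, (∑ i ∈ Finset.univ.filter (fun i => j ∈ supp2 e a i), lam i) • e j := by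
        refine Finset.sum_congr rfl fun j _ => ?_
        rw [Finset.sum_smul, Finset.sum_filter]

end Aux

section Aux2
variable {G : Type*} [AddCommGroup G] {r : ℕ} {m : Fin r → ℕ} {e : Fin r → G}

lemma nsmul_reduce2 {j : Fin r} (hord : addOrderOf (e j) = m j) (c : ℕ) :
    c • e j = (c % m j) • e j := by
  have hz : (m j) • e j = 0 := by rw [← hord]; exact addOrderOf_nsmul_eq_zero _
  conv_lhs => rw [← Nat.div_add_mod c (m j)]
  rw [add_nsmul, mul_nsmul, hz, smul_zero, zero_add]

lemma e_eq_iff2 (he : StandardGen m e) (hm1 : ∀ i, 1 < m i) (c d : Fin r → ℕ) :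
    ∑ j, c j • e j = ∑ j, d j • e j ↔ ∀ j, c j % m j = d j % m j := by
  have hpos : ∀ j, 0 < m j := fun j => lt_trans Nat.zero_lt_one (hm1 j)
  have hred : ∀ (c : Fin r → ℕ), ∑ j, c j • e j = ∑ j, (c j % m j) • e j := fun c =>
    Finset.sum_congr rfl fun j _ => nsmul_reduce2 (he.1 j) (c j)
  constructor
  · intro h
    obtain ⟨lam, -, hu⟩ := he.2 (∑ j, c j • e j)
    have h1 := hu (fun j => c j % m j) ⟨fun j => Nat.mod_lt _ (hpos j), hred c⟩
    have h2 := hu (fun j => d j % m j) ⟨fun j => Nat.mod_lt _ (hpos j), by rw [h]; exact hred d⟩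
    intro j
    exact congrFun (h1.trans h2.symm) j
  · intro h
    rw [hred c, hred d]
    exact Finset.sum_congr rfl fun j _ => by rw [h j]

/-- Splitting off the `i`-th term of a sum over an updated function. -/
lemma sum_comp_update2 {M : Type*} [AddCommMonoid M] (lam : Fin r → ℕ) (i : Fin r) (b : ℕ)
    (v : Fin r → ℕ → M) :
    ∑ k, v k (Function.update lam i b k) = v i b + ∑ k ∈ Finset.univ.erase i, v k (lam k) := by
  rw [← Finset.add_sum_erase _ (fun k => v k (Function.update lam i b k)) (Finset.mem_univ i)]
  simp only [Function.update_self]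
  congr 1
  exact Finset.sum_congr rfl fun k hk => by
    rw [Function.update_of_ne (Finset.mem_erase.mp hk).1]

lemma sum_split2 {M : Type*} [AddCommMonoid M] (i : Fin r) (v : Fin r → M) :
    ∑ k, v k = v i + ∑ k ∈ Finset.univ.erase i, v k :=
  (Finset.add_sum_erase _ v (Finset.mem_univ i)).symm

end Aux2

theorem stmt2 (G : Type*) [AddCommGroup G] [Finite G] {r : ℕ} (m : Fin r → ℕ)
    (hm1 : ∀ i, 1 < m i) (hm : ∀ i j : Fin r, i ≤ j → m i ∣ m j)
    (e a : Fin r → G) (he : StandardGen m e)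
    (ha : ∀ i, a i = e i ∨ ∃ j, i < j ∧ a i = e i + a j) :
    (∀ g : G, ∃! lam : Fin r → ℕ, (∀ i, lam i < m i) ∧ g = ∑ i, lam i • a i) ∧
      (∀ g : G, ∀ lam : Fin r → ℕ, (∀ i, lam i < m i) → g = ∑ i, lam i • a i →
        lenPlus (Set.range a) g = ∑ i, lam i) := by
  classical
  -- Uniqueness of reduced representations w.r.t. `a`.
  have huniq : ∀ lam mu : Fin r → ℕ, (∀ i, lam i < m i) → (∀ i, mu i < m i) →
      (∑ i, lam i • a i) = ∑ i, mu i • a i → lam = mu := by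
    intro lam mu hl hmu heq
    rw [sum_a_coef2 e a ha lam, sum_a_coef2 e a ha mu, e_eq_iff2 he hm1] at heq
    funext j
    suffices H : ∀ n : ℕ, ∀ j : Fin r, j.val = n → lam j = mu j from H j.val j rfl
    intro n
    induction n using Nat.strong_induction_on with
    | _ n ih =>
      intro j hj
      have hmem : j ∈ Finset.univ.filter (fun i => j ∈ supp2 e a i) := by
        simp [mem_supp2_self e a j]
      have hsplit : ∀ (f : Fin r → ℕ), coef2 e a f j
          = f j + ∑ i ∈ (Finset.univ.filter (fun i => j ∈ supp2 e a i)).erase j, f i := by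
        intro f
        rw [coef2, ← Finset.add_sum_erase _ _ hmem]
      have hts : ∑ i ∈ (Finset.univ.filter (fun i => j ∈ supp2 e a i)).erase j, lam i
          = ∑ i ∈ (Finset.univ.filter (fun i => j ∈ supp2 e a i)).erase j, mu i := by
        refine Finset.sum_congr rfl fun i hi => ?_
        have hi1 : i ≠ j := (Finset.mem_erase.mp hi).1
        have hi2 : i ≤ j := le_of_mem_supp2 e a i j
          (Finset.mem_filter.mp (Finset.mem_erase.mp hi).2).2
        have hi3 : i.val < n := by
          have := lt_of_le_of_ne hi2 hi1
          rw [Fin.lt_def] at this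
          omega
        exact ih i.val hi3 i rfl
      have h := heq j
      rw [hsplit lam, hsplit mu, hts] at h
      have h2 : lam j ≡ mu j [MOD m j] := Nat.ModEq.add_right_cancel' _ h
      rwa [Nat.ModEq, Nat.mod_eq_of_lt (hl j), Nat.mod_eq_of_lt (hmu j)] at h2
  -- Existence via a counting argument.
  have hEU : ∀ g : G, ∃! lam : Fin r → ℕ, (∀ i, lam i < m i) ∧ g = ∑ i, lam i • a i := by
    have hβ : Function.Bijective (fun x : (∀ i, Fin (m i)) => ∑ i, (x i : ℕ) • e i) := by
      constructor
      · intro x y hxy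
        have hxy' : ∑ i, ((x i : ℕ)) • e i = ∑ i, ((y i : ℕ)) • e i := hxy
        obtain ⟨lam, -, hu⟩ := he.2 (∑ i, (x i : ℕ) • e i)
        have h1 := hu (fun i => (x i : ℕ)) ⟨fun i => (x i).isLt, rfl⟩
        have h2 := hu (fun i => (y i : ℕ)) ⟨fun i => (y i).isLt, by exact hxy'⟩
        funext i
        exact Fin.ext (congrFun (h1.trans h2.symm) i)
      · intro g
        obtain ⟨lam, ⟨hlt, hg⟩, -⟩ := he.2 g
        exact ⟨fun i => ⟨lam i, hlt i⟩, hg.symm⟩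
    have hα : Function.Injective (fun x : (∀ i, Fin (m i)) => ∑ i, (x i : ℕ) • a i) := by
      intro x y hxy
      have hxy' : ∑ i, ((x i : ℕ)) • a i = ∑ i, ((y i : ℕ)) • a i := hxy
      have := huniq (fun i => (x i : ℕ)) (fun i => (y i : ℕ))
        (fun i => (x i).isLt) (fun i => (y i).isLt) hxy'
      funext i
      exact Fin.ext (congrFun this i)
    have hαs : Function.Surjective (fun x : (∀ i, Fin (m i)) => ∑ i, (x i : ℕ) • a i) := by
      let E := Equiv.ofBijective _ hβ
      have hcomp : Function.Injective
          (E.symm ∘ fun x : (∀ i, Fin (m i)) => ∑ i, (x i : ℕ) • a i) :=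
        E.symm.injective.comp hα
      have hb := Finite.injective_iff_bijective.mp hcomp
      intro g
      obtain ⟨x, hx⟩ := hb.2 (E.symm g)
      exact ⟨x, E.symm.injective hx⟩
    intro g
    obtain ⟨x, hx⟩ := hαs g
    have hx' : ∑ i, ((x i : ℕ)) • a i = g := hx
    refine ⟨fun i => (x i : ℕ), ⟨fun i => (x i).isLt, hx'.symm⟩, ?_⟩
    rintro lam ⟨hlt, hg⟩
    exact huniq _ _ hlt (fun i => (x i).isLt) (hg.symm.trans hx'.symm)
  refine ⟨hEU, ?_⟩
  -- The length function.
  set F : G → ℕ := fun g => ∑ i, (hEU g).choose i with hF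
  have hrep : ∀ (g : G) (lam : Fin r → ℕ), (∀ i, lam i < m i) → g = ∑ i, lam i • a i →
      F g = ∑ i, lam i := by
    intro g lam h1 h2
    have h3 := (hEU g).choose_spec.2 lam ⟨h1, h2⟩
    calc F g = ∑ i, (hEU g).choose i := rfl
    _ = ∑ i, lam i := by rw [← h3]
  have hme : ∀ i, (m i) • e i = 0 := fun i => by
    rw [← he.1 i]; exact addOrderOf_nsmul_eq_zero _
  -- key inequality
  have hkey : ∀ k : ℕ, ∀ i : Fin r, r - i.val ≤ k → ∀ g : G, F (g + a i) ≤ F g + 1 := by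
    intro k
    induction k with
    | zero =>
      intro i hi
      exact absurd hi (by have := i.isLt; omega)
    | succ k ih =>
      have iter : ∀ j : Fin r, r - j.val ≤ k → ∀ (n : ℕ) (g : G), F (g + n • a j) ≤ F g + n := by
        intro j hj n
        induction n with
        | zero => intro g; simp
        | succ n ihn =>
          intro g
          have hrw : g + (n + 1) • a j = (g + n • a j) + a j := by
            rw [succ_nsmul, add_assoc]
          rw [hrw]
          have h1 := ih j hj (g + n • a j)
          have h2 := ihn g
          omega
      intro i hi g
      obtain ⟨⟨hlt, hg⟩, -⟩ := (hEU g).choose_spec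
      set lam := (hEU g).choose with hlamdef
      have hFg : F g = ∑ k, lam k := hrep g lam hlt hg
      have hlamsplit : ∑ k, lam k = lam i + ∑ k ∈ Finset.univ.erase i, lam k :=
        sum_split2 i lam
      by_cases hcase : lam i + 1 < m i
      · have hb : ∀ k, Function.update lam i (lam i + 1) k < m k := by
          intro k
          rcases eq_or_ne k i with rfl | hk
          · simpa using hcase
          · simpa [Function.update, hk] using hlt k
        have h2 : g + a i = ∑ k, (Function.update lam i (lam i + 1)) k • a k := by
          rw [hg, sum_comp_update2 lam i (lam i + 1) (fun k n => n • a k),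
            sum_split2 i (fun k => lam k • a k), succ_nsmul]
          abel
        have hF2 := hrep _ _ hb h2
        rw [hF2, sum_comp_update2 lam i (lam i + 1) (fun _ n => n)]
        omega
      · have hlam_i : lam i + 1 = m i := by have := hlt i; omega
        set lam0 := Function.update lam i 0 with hlam0
        have hb0 : ∀ k, lam0 k < m k := by
          intro k
          rcases eq_or_ne k i with rfl | hk
          · simp only [hlam0, Function.update_self]
            have := hm1 k; omega
          · simpa [hlam0, Function.update, hk] using hlt k
        have hFg0 : F (∑ k, lam0 k • a k) = ∑ k, lam0 k := hrep _ _ hb0 rfl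
        have hsum0 : ∑ k, lam0 k = ∑ k ∈ Finset.univ.erase i, lam k := by
          rw [hlam0, sum_comp_update2 lam i 0 (fun _ n => n), zero_add]
        have hsplit : g + a i = (∑ k, lam0 k • a k) + (m i) • a i := by
          rw [hg, hlam0, sum_comp_update2 lam i 0 (fun k n => n • a k),
            sum_split2 i (fun k => lam k • a k), ← hlam_i, succ_nsmul, zero_smul]
          abel
        rcases ha i with hai | ⟨j, hij, haij⟩
        · have hz : (m i) • a i = 0 := by rw [hai]; exact hme i
          rw [hsplit, hz, add_zero, hFg0]
          omega
        · have hj : r - j.val ≤ k := by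
            have h1 := i.isLt
            have h2 := j.isLt
            rw [Fin.lt_def] at hij
            omega
          have hz : (m i) • a i = (m i) • a j := by
            rw [haij, smul_add, hme i, zero_add]
          rw [hsplit, hz]
          have := iter j hj (m i) (∑ k, lam0 k • a k)
          omega
  have hkey' : ∀ (i : Fin r) (g : G), F (g + a i) ≤ F g + 1 :=
    fun i g => hkey r i (Nat.sub_le _ _) g
  -- iterSum lemmas
  set A : Set G := insert 0 (Set.range a) with hA
  have hstep : ∀ (n : ℕ) (x y : G), x ∈ iterSum A n → y ∈ A → x + y ∈ iterSum A (n + 1) :=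
    fun n x y hx hy => Set.add_mem_add hx hy
  have hmem_smul : ∀ (n : ℕ) (i : Fin r), (n • a i) ∈ iterSum A n := by
    intro n i
    induction n with
    | zero => rw [zero_smul]; exact rfl
    | succ n ihn =>
      rw [succ_nsmul]
      exact hstep n _ _ ihn (Set.mem_insert_iff.mpr (Or.inr ⟨i, rfl⟩))
  have hadd : ∀ (p q : ℕ) (x y : G), x ∈ iterSum A p → y ∈ iterSum A q →
      x + y ∈ iterSum A (p + q) := by
    intro p q
    induction q with
    | zero =>
      intro x y hx hy
      have hy0 : y = 0 := hy
      rw [hy0]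
      simpa using hx
    | succ q ihq =>
      intro x y hx hy
      obtain ⟨u, hu, v, hv, huv⟩ := Set.mem_add.mp hy
      rw [← huv, ← add_assoc x u v]
      exact hstep (p + q) (x + u) v (ihq x u hx hu) hv
  have hsum_mem : ∀ (lam : Fin r → ℕ), (∑ i, lam i • a i) ∈ iterSum A (∑ i, lam i) := by
    intro lam
    suffices H : ∀ s : Finset (Fin r), (∑ i ∈ s, lam i • a i) ∈ iterSum A (∑ i ∈ s, lam i)
      from H _
    intro s
    induction s using Finset.induction_on with
    | empty =>
      simp only [Finset.sum_empty]
      exact rfl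
    | insert _ _ hnot ihs =>
      rw [Finset.sum_insert hnot, Finset.sum_insert hnot]
      exact hadd _ _ _ _ (hmem_smul _ _) ihs
  have hlb : ∀ (n : ℕ) (g : G), g ∈ iterSum A n → F g ≤ n := by
    intro n
    induction n with
    | zero =>
      intro g hg
      have hg0 : g = 0 := hg
      have hF0 : F 0 = ∑ i : Fin r, (0 : ℕ) :=
        hrep 0 (fun _ => 0) (fun i => by show (0:ℕ) < m i; have := hm1 i; omega) (by simp)
      rw [hg0, hF0]
      simp
    | succ n ihn =>
      intro g hg
      obtain ⟨x, hx, y, hy, hxy⟩ := Set.mem_add.mp hg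
      rcases Set.mem_insert_iff.mp hy with rfl | ⟨i, rfl⟩
      · rw [← hxy, add_zero]
        exact le_trans (ihn x hx) (Nat.le_succ n)
      · rw [← hxy]
        have h1 := hkey' i x
        have h2 := ihn x hx
        omega
  -- conclude
  intro g lam hlt hg
  have hFg : F g = ∑ i, lam i := hrep g lam hlt hg
  have hmem : g ∈ iterSum A (∑ i, lam i) := hg ▸ hsum_mem lam
  have h1 : sInf {n : ℕ | g ∈ iterSum A n} ≤ ∑ i, lam i := Nat.sInf_le hmem
  have hne : {n : ℕ | g ∈ iterSum A n}.Nonempty := ⟨_, hmem⟩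
  have h2 : F g ≤ sInf {n : ℕ | g ∈ iterSum A n} := hlb _ g (Nat.sInf_mem hne)
  have hlen : lenPlus (Set.range a) g = sInf {n : ℕ | g ∈ iterSum A n} := rfl
  rw [hlen]
  omega
end

section
/- Let G be a finite abelian group and ρ ≥ 2. Then s_ρ(G) = max over proper subgroups H of G of |H| · t_ρ(G/H), where s_ρ(G) is the maximum cardinality of a generating set A of G with diam_A^+(G) ≥ ρ (or 0 if none exists), and t_ρ(G) is the maximum cardinality of an aperiodic ρ-maximal generating set. -/
open Pointwise

variable {G : Type*}

section AuxLemmas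

variable [AddCommGroup G]

lemma iterSum_succ' (A : Set G) (n : ℕ) : iterSum A (n + 1) = iterSum A n + A := rfl

lemma iterSum_subset {A B : Set G} (h : A ⊆ B) : ∀ n, iterSum A n ⊆ iterSum B n
  | 0 => subset_rfl
  | n + 1 => Set.add_subset_add (iterSum_subset h n) h

lemma add_singleton_zero (A : Set G) : A + ({0} : Set G) = A := by
  simp [Set.add_singleton]

lemma zero_mem_iterSum {A : Set G} (h0 : (0:G) ∈ A) : ∀ n, (0:G) ∈ iterSum A n
  | 0 => Set.mem_singleton 0
  | n + 1 => by simpa [iterSum_succ'] using Set.add_mem_add (zero_mem_iterSum h0 n) h0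

lemma iterSum_mono {A : Set G} (h0 : (0:G) ∈ A) {m n : ℕ} (h : m ≤ n) :
    iterSum A m ⊆ iterSum A n := by
  induction h with
  | refl => exact subset_rfl
  | step _ ih => exact fun x hx => by simpa [iterSum_succ'] using Set.add_mem_add (ih hx) h0

lemma iterSum_add (A : Set G) (m : ℕ) : ∀ n, iterSum A (m + n) = iterSum A m + iterSum A n
  | 0 => (add_singleton_zero _).symm
  | n + 1 => by
      rw [← Nat.add_assoc, iterSum_succ', iterSum_succ', iterSum_add A m n, add_assoc]

lemma nsmul_mem_iterSum {A : Set G} {x : G} {n : ℕ} (hx : x ∈ iterSum A n) :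
    ∀ j : ℕ, j • x ∈ iterSum A (j * n)
  | 0 => by rw [zero_smul, Nat.zero_mul]; exact Set.mem_singleton 0
  | j + 1 => by
      have h1 := nsmul_mem_iterSum hx j
      have h2 : j • x + x ∈ iterSum A (j * n) + iterSum A n := Set.add_mem_add h1 hx
      rw [← iterSum_add] at h2
      have e1 : (j + 1) • x = j • x + x := succ_nsmul x j
      have e2 : (j + 1) * n = j * n + n := by ring
      rw [e1, e2]; exact h2

lemma image_iterSum {Q : Type*} [AddCommGroup Q] (f : G →+ Q) (A : Set G) :
    ∀ n, f '' iterSum A n = iterSum (f '' A) n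
  | 0 => by simp [iterSum]
  | n + 1 => by rw [iterSum_succ', iterSum_succ', Set.image_add, image_iterSum f A n]

lemma exists_iterSum_eq_univ [Finite G] {A : Set G} (hA : Spans A) :
    ∃ n, iterSum (insert 0 A) n = Set.univ := by
  classical
  cases nonempty_fintype G
  set S := insert (0:G) A with hS
  have h0 : (0:G) ∈ S := Set.mem_insert _ _
  have hmem : ∀ g : G, ∃ n, g ∈ iterSum S n := by
    intro g
    have hA' : AddSubgroup.closure A = ⊤ := hA
    have hg : g ∈ AddSubgroup.closure S := by
      have h2 : (⊤ : AddSubgroup G) ≤ AddSubgroup.closure S :=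
        hA' ▸ AddSubgroup.closure_mono (Set.subset_insert _ _)
      exact h2 (AddSubgroup.mem_top g)
    refine AddSubgroup.closure_induction ?_ ?_ ?_ ?_ hg
    · intro x hx
      refine ⟨1, ?_⟩
      have := Set.add_mem_add (Set.mem_singleton (0:G)) hx
      simpa [iterSum] using this
    · exact ⟨0, Set.mem_singleton 0⟩
    · rintro x y _ _ ⟨nx, hnx⟩ ⟨ny, hny⟩
      exact ⟨nx + ny, by rw [iterSum_add]; exact Set.add_mem_add hnx hny⟩
    · rintro x _ ⟨n, hn⟩
      refine ⟨(addOrderOf x - 1) * n, ?_⟩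
      have hpos := addOrderOf_pos x
      have hx0 : addOrderOf x • x = 0 := addOrderOf_nsmul_eq_zero x
      have hk : addOrderOf x - 1 + 1 = addOrderOf x := by omega
      have h2 : (addOrderOf x - 1) • x + x = 0 := by
        rw [← succ_nsmul x (addOrderOf x - 1), hk]; exact hx0
      have h3 : -x = (addOrderOf x - 1) • x := neg_eq_of_add_eq_zero_left h2
      rw [h3]
      exact nsmul_mem_iterSum hn _
  choose f hf using hmem
  refine ⟨Finset.univ.sup f, Set.eq_univ_of_forall fun g => ?_⟩
  exact iterSum_mono h0 (Finset.le_sup (Finset.mem_univ g)) (hf g)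

lemma sat_preimage_image {H : AddSubgroup G} {X : Set G}
    (hsat : ∀ h ∈ H, X + {h} = X) :
    (QuotientAddGroup.mk' H) ⁻¹' ((QuotientAddGroup.mk' H) '' X) = X := by
  refine Set.Subset.antisymm ?_ (Set.subset_preimage_image _ _)
  rintro g ⟨x, hx, hxg⟩
  have hgx : g - x ∈ H := by
    have h3 : (QuotientAddGroup.mk' H) (g - x) = 0 := by rw [map_sub, hxg, sub_self]
    have h4 : g - x ∈ (QuotientAddGroup.mk' H).ker := AddMonoidHom.mem_ker.mpr h3
    rwa [QuotientAddGroup.ker_mk'] at h4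
  have h5 := Set.add_mem_add hx (Set.mem_singleton (g - x))
  rw [hsat _ hgx] at h5
  simpa using h5

lemma eq_univ_of_image_univ {H : AddSubgroup G} {X : Set G}
    (hsat : ∀ h ∈ H, X + {h} = X)
    (h : (QuotientAddGroup.mk' H) '' X = Set.univ) : X = Set.univ := by
  rw [← sat_preimage_image hsat, h, Set.preimage_univ]

lemma ncard_le_natCard [Finite G] (A : Set G) : A.ncard ≤ Nat.card G := by
  simpa [Set.ncard_univ] using Set.ncard_le_ncard (Set.subset_univ A) Set.finite_univ

lemma ncard_preimage {Q : Type*} [AddCommGroup Q] [Finite G] (f : G →+ Q)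
    (hs : Function.Surjective f) (S : Set Q) :
    (f ⁻¹' S).ncard = Nat.card f.ker * S.ncard := by
  classical
  have e : (f ⁻¹' S) ≃ f.ker × S :=
    { toFun := fun g => (⟨g.1 - Function.surjInv hs (f g.1),
        AddMonoidHom.mem_ker.mpr (by rw [map_sub, Function.surjInv_eq hs, sub_self])⟩,
        ⟨f g.1, g.2⟩)
      invFun := fun p => ⟨Function.surjInv hs p.2.1 + p.1.1, by
        have h1 : f (Function.surjInv hs p.2.1 + p.1.1) = p.2.1 := by
          rw [map_add, Function.surjInv_eq hs, AddMonoidHom.mem_ker.mp p.1.2, add_zero]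
        have := p.2.2
        simp only [Set.mem_preimage, h1]
        exact this⟩
      left_inv := fun g => by
        apply Subtype.ext
        show Function.surjInv hs (f g.1) + (g.1 - Function.surjInv hs (f g.1)) = g.1
        abel
      right_inv := fun p => by
        have h1 : f (Function.surjInv hs p.2.1 + p.1.1) = p.2.1 := by
          rw [map_add, Function.surjInv_eq hs, AddMonoidHom.mem_ker.mp p.1.2, add_zero]
        refine Prod.ext (Subtype.ext ?_) (Subtype.ext ?_)
        · show (Function.surjInv hs p.2.1 + p.1.1)
              - Function.surjInv hs (f (Function.surjInv hs p.2.1 + p.1.1)) = p.1.1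
          rw [h1]; abel
        · exact h1 }
  rw [← Nat.card_coe_set_eq, Nat.card_congr e, Nat.card_prod,
    Nat.card_coe_set_eq]

lemma spans_image {Q : Type*} [AddCommGroup Q] (f : G →+ Q) (hs : Function.Surjective f)
    {B : Set G} (hB : Spans B) : Spans (f '' B) := by
  have hB' : AddSubgroup.closure B = ⊤ := hB
  show AddSubgroup.closure (f '' B) = ⊤
  rw [← AddMonoidHom.map_closure, hB', ← AddMonoidHom.range_eq_map]
  exact AddMonoidHom.range_eq_top.mpr hs

lemma spans_preimage {H : AddSubgroup G} (hH : H ≠ ⊤) {S : Set (G ⧸ H)}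
    (hS : Spans S) : Spans ((QuotientAddGroup.mk' H) ⁻¹' S) := by
  have hS' : AddSubgroup.closure S = ⊤ := hS
  have hπs : Function.Surjective (QuotientAddGroup.mk' H) := QuotientAddGroup.mk'_surjective H
  have hSne : S.Nonempty := by
    rcases Set.eq_empty_or_nonempty S with h | h
    · exfalso
      apply hH
      rw [h, AddSubgroup.closure_empty] at hS'
      refine AddSubgroup.ext fun g => ?_
      simp only [AddSubgroup.mem_top, iff_true]
      have hg : (g : G ⧸ H) ∈ (⊥ : AddSubgroup (G ⧸ H)) := by
        rw [hS']; exact AddSubgroup.mem_top _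
      exact (QuotientAddGroup.eq_zero_iff g).mp (AddSubgroup.mem_bot.mp hg)
    · exact h
  obtain ⟨q0, hq0⟩ := hSne
  obtain ⟨a, ha⟩ := hπs q0
  have haA : a ∈ (QuotientAddGroup.mk' H) ⁻¹' S := by rw [Set.mem_preimage, ha]; exact hq0
  have hHle : ∀ h ∈ H, h ∈ AddSubgroup.closure ((QuotientAddGroup.mk' H) ⁻¹' S) := by
    intro h hh
    have h1 : a + h ∈ (QuotientAddGroup.mk' H) ⁻¹' S := by
      rw [Set.mem_preimage, map_add]
      have h2 : (QuotientAddGroup.mk' H) h = 0 := by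
        have : h ∈ (QuotientAddGroup.mk' H).ker := by
          rw [QuotientAddGroup.ker_mk']; exact hh
        exact AddMonoidHom.mem_ker.mp this
      rw [h2, add_zero, ha]; exact hq0
    have h3 := sub_mem (AddSubgroup.subset_closure h1) (AddSubgroup.subset_closure haA)
    simpa using h3
  show AddSubgroup.closure ((QuotientAddGroup.mk' H) ⁻¹' S) = ⊤
  rw [eq_top_iff]
  intro g _
  have h1 : (QuotientAddGroup.mk' H) g ∈ AddSubgroup.closure S := by
    rw [hS']; exact AddSubgroup.mem_top _
  have h2 : AddSubgroup.closure S =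
      (AddSubgroup.closure ((QuotientAddGroup.mk' H) ⁻¹' S)).map (QuotientAddGroup.mk' H) := by
    rw [AddMonoidHom.map_closure, Set.image_preimage_eq S hπs]
  rw [h2] at h1
  obtain ⟨x, hx, hxg⟩ := h1
  have hgx : g - x ∈ H := by
    have h3 : (QuotientAddGroup.mk' H) (g - x) = 0 := by rw [map_sub, hxg, sub_self]
    have h4 : g - x ∈ (QuotientAddGroup.mk' H).ker := AddMonoidHom.mem_ker.mpr h3
    rwa [QuotientAddGroup.ker_mk'] at h4
  have h5 : g = x + (g - x) := by abel
  rw [h5]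
  exact add_mem hx (hHle _ hgx)

lemma rho_le_diamPlus [Finite G] {A : Set G} (hA : Spans A) {ρ : ℕ} (hρ : 2 ≤ ρ)
    (h : iterSum (insert 0 A) (ρ - 1) ≠ Set.univ) : ρ ≤ diamPlus A := by
  obtain ⟨n, hn⟩ := exists_iterSum_eq_univ hA
  show ρ ≤ sInf {n : ℕ | iterSum (insert 0 A) n = Set.univ}
  refine le_csInf ⟨n, hn⟩ ?_
  intro m hm
  by_contra hlt
  push_neg at hlt
  apply h
  apply Set.eq_univ_of_univ_subset
  rw [← hm]
  exact iterSum_mono (Set.mem_insert _ _) (by omega)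

/-- The period subgroup of a set. -/
def periodSub (B : Set G) : AddSubgroup G where
  carrier := {g | B + {g} = B}
  zero_mem' := add_singleton_zero B
  add_mem' := by
    intro a b ha hb
    have ha' : B + {a} = B := ha
    have hb' : B + {b} = B := hb
    show B + {a + b} = B
    rw [← Set.singleton_add_singleton, ← add_assoc, ha', hb']
  neg_mem' := by
    intro a ha
    have ha' : B + {a} = B := ha
    show B + {-a} = B
    conv_lhs => rw [← ha']
    rw [add_assoc, Set.singleton_add_singleton, add_neg_cancel, add_singleton_zero]

lemma exists_rhoMax [Finite G] {ρ : ℕ} {A : Set G}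
    (hA : iterSum (insert 0 A) (ρ - 1) ≠ Set.univ) :
    ∃ B, A ⊆ B ∧ RhoMax ρ B := by
  obtain ⟨B, hB, hBmax⟩ := Set.Finite.exists_maximalFor id
    {C : Set G | A ⊆ C ∧ iterSum (insert 0 C) (ρ - 1) ≠ Set.univ}
    (Set.toFinite _) ⟨A, subset_rfl, hA⟩
  exact ⟨B, hB.1, hB.2, fun C hBC hC => le_antisymm (hBmax ⟨hB.1.trans hBC, hC⟩ hBC) hBC⟩

end AuxLemmas


theorem stmt5 (G : Type*) [AddCommGroup G] [Finite G] (ρ : ℕ) (hρ : 2 ≤ ρ) :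
    sInv ρ G =
      sSup {k : ℕ | ∃ H : AddSubgroup G, H ≠ ⊤ ∧ k = Nat.card H * tInv ρ (G ⧸ H)} := by
  classical
  have htBound : ∀ H : AddSubgroup G, tInv ρ (G ⧸ H) ≤ Nat.card (G ⧸ H) := by
    intro H
    refine csSup_le' ?_
    rintro k ⟨A, -, -, -, rfl⟩
    exact ncard_le_natCard A
  have hbddT : ∀ H : AddSubgroup G, BddAbove {k : ℕ | ∃ A : Set (G ⧸ H),
      Aperiodic A ∧ RhoMax ρ A ∧ Spans A ∧ A.ncard = k} := by
    intro H
    exact ⟨Nat.card (G ⧸ H), by rintro k ⟨A, -, -, -, rfl⟩; exact ncard_le_natCard A⟩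
  have hbddL : BddAbove {k : ℕ | ∃ A : Set G, Spans A ∧ ρ ≤ diamPlus A ∧ A.ncard = k} :=
    ⟨Nat.card G, by rintro k ⟨A, -, -, rfl⟩; exact ncard_le_natCard A⟩
  have hbddR : BddAbove {k : ℕ | ∃ H : AddSubgroup G, H ≠ ⊤ ∧
      k = Nat.card H * tInv ρ (G ⧸ H)} := by
    refine ⟨Nat.card G, ?_⟩
    rintro k ⟨H, -, rfl⟩
    calc Nat.card H * tInv ρ (G ⧸ H) ≤ Nat.card H * Nat.card (G ⧸ H) :=
          Nat.mul_le_mul_left _ (htBound H)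
      _ = Nat.card G := by
          rw [mul_comm]; exact H.card_eq_card_quotient_mul_card_addSubgroup.symm
  apply le_antisymm
  · -- sInv ≤ sSup R
    refine csSup_le' ?_
    rintro k ⟨A, hASp, hAd, rfl⟩
    have h1 : iterSum (insert 0 A) (ρ - 1) ≠ Set.univ := by
      intro hc
      have h2 : diamPlus A ≤ ρ - 1 := Nat.sInf_le hc
      omega
    obtain ⟨B, hAB, hBmax1, hBmax2⟩ := exists_rhoMax h1
    have hBSp : Spans B := by
      have hASp' : AddSubgroup.closure A = ⊤ := hASp
      show AddSubgroup.closure B = ⊤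
      rw [eq_top_iff, ← hASp']
      exact AddSubgroup.closure_mono hAB
    have h0B : (0:G) ∈ B := by
      have h3 := hBmax2 (insert 0 B) (Set.subset_insert _ _)
        (by rw [Set.insert_idem]; exact hBmax1)
      rw [← h3]; exact Set.mem_insert _ _
    have hiB : insert (0:G) B = B := Set.insert_eq_self.mpr h0B
    set H := periodSub B with hHdef
    have hsatB : ∀ h ∈ H, B + {h} = B := fun h hh => hh
    have hHne : H ≠ ⊤ := by
      intro htop
      apply hBmax1
      have hBuniv : B = Set.univ := by
        apply Set.eq_univ_of_forall
        intro g
        have h4 := Set.add_mem_add h0B (Set.mem_singleton g)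
        rw [hsatB g (htop ▸ AddSubgroup.mem_top g)] at h4
        simpa using h4
      rw [hiB, hBuniv]
      obtain ⟨m, hm⟩ : ∃ m, ρ - 1 = m + 1 := ⟨ρ - 2, by omega⟩
      rw [hm]
      apply Set.eq_univ_of_forall
      intro g
      have h5 := Set.add_mem_add (zero_mem_iterSum (Set.mem_univ (0:G)) m) (Set.mem_univ g)
      simpa [iterSum_succ'] using h5
    have hπs : Function.Surjective (QuotientAddGroup.mk' H) := QuotientAddGroup.mk'_surjective H
    have hBpre : (QuotientAddGroup.mk' H) ⁻¹' ((QuotientAddGroup.mk' H) '' B) = B :=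
      sat_preimage_image hsatB
    have hBbSp : Spans ((QuotientAddGroup.mk' H) '' B) := spans_image _ hπs hBSp
    have hYsat : ∀ h ∈ H, iterSum B (ρ - 1) + {h} = iterSum B (ρ - 1) := by
      obtain ⟨m, hm⟩ : ∃ m, ρ - 1 = m + 1 := ⟨ρ - 2, by omega⟩
      rw [hm]
      intro h hh
      rw [iterSum_succ', add_assoc, hsatB h hh]
    have hYim : (QuotientAddGroup.mk' H) '' iterSum B (ρ - 1)
        = iterSum (insert 0 ((QuotientAddGroup.mk' H) '' B)) (ρ - 1) := by
      have h0Bb : (0 : G ⧸ H) ∈ (QuotientAddGroup.mk' H) '' B := ⟨0, h0B, map_zero _⟩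
      rw [image_iterSum, Set.insert_eq_self.mpr h0Bb]
    have hBbne : iterSum (insert 0 ((QuotientAddGroup.mk' H) '' B)) (ρ - 1) ≠ Set.univ := by
      intro hc
      apply hBmax1
      rw [hiB]
      exact eq_univ_of_image_univ hYsat (by rw [hYim]; exact hc)
    have hBbAp : Aperiodic ((QuotientAddGroup.mk' H) '' B) := by
      intro q hq
      obtain ⟨g, rfl⟩ := hπs q
      have hsat2 : ∀ h ∈ H, (B + {g}) + {h} = B + {g} := by
        intro h hh
        rw [add_assoc, Set.singleton_add_singleton, add_comm g h,
          ← Set.singleton_add_singleton, ← add_assoc, hsatB h hh]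
      have him : (QuotientAddGroup.mk' H) '' (B + {g}) = (QuotientAddGroup.mk' H) '' B := by
        rw [Set.image_add, Set.image_singleton]
        exact hq
      have h6 : B + {g} = B := by
        calc B + {g} = (QuotientAddGroup.mk' H) ⁻¹' ((QuotientAddGroup.mk' H) '' (B + {g})) :=
              (sat_preimage_image hsat2).symm
          _ = (QuotientAddGroup.mk' H) ⁻¹' ((QuotientAddGroup.mk' H) '' B) := by rw [him]
          _ = B := hBpre
      have hgH : g ∈ H := h6
      have : g ∈ (QuotientAddGroup.mk' H).ker := by rw [QuotientAddGroup.ker_mk']; exact hgH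
      exact AddMonoidHom.mem_ker.mp this
    have hBbMax : RhoMax ρ ((QuotientAddGroup.mk' H) '' B) := by
      refine ⟨hBbne, ?_⟩
      intro Cb hsub hCb
      have hC : (QuotientAddGroup.mk' H) ⁻¹' Cb = B := by
        apply hBmax2
        · rw [← hBpre]; exact Set.preimage_mono hsub
        · intro hc
          apply hCb
          have himC : (QuotientAddGroup.mk' H) ''
              (iterSum (insert 0 ((QuotientAddGroup.mk' H) ⁻¹' Cb)) (ρ - 1)) = Set.univ := by
            rw [hc, Set.image_univ, Set.range_eq_univ]
            exact hπs
          have h7 : (QuotientAddGroup.mk' H) '' (insert 0 ((QuotientAddGroup.mk' H) ⁻¹' Cb))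
              ⊆ insert 0 Cb := by
            rw [Set.image_insert_eq, map_zero]
            exact Set.insert_subset_insert (Set.image_preimage_subset _ _)
          apply Set.eq_univ_of_univ_subset
          rw [← himC, image_iterSum]
          exact iterSum_subset h7 _
      calc Cb = (QuotientAddGroup.mk' H) '' ((QuotientAddGroup.mk' H) ⁻¹' Cb) :=
            (Set.image_preimage_eq Cb hπs).symm
        _ = (QuotientAddGroup.mk' H) '' B := by rw [hC]
    have hcard : B.ncard = Nat.card H * ((QuotientAddGroup.mk' H) '' B).ncard := by
      conv_lhs => rw [← hBpre]
      rw [ncard_preimage _ hπs, QuotientAddGroup.ker_mk']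
    have hBbMem : ((QuotientAddGroup.mk' H) '' B).ncard ≤ tInv ρ (G ⧸ H) :=
      le_csSup (hbddT H) ⟨_, hBbAp, hBbMax, hBbSp, rfl⟩
    calc A.ncard ≤ B.ncard := Set.ncard_le_ncard hAB (Set.toFinite B)
      _ = Nat.card H * ((QuotientAddGroup.mk' H) '' B).ncard := hcard
      _ ≤ Nat.card H * tInv ρ (G ⧸ H) := Nat.mul_le_mul_left _ hBbMem
      _ ≤ sSup {k : ℕ | ∃ H : AddSubgroup G, H ≠ ⊤ ∧ k = Nat.card H * tInv ρ (G ⧸ H)} :=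
          le_csSup hbddR ⟨H, hHne, rfl⟩
  · refine csSup_le' ?_
    rintro k ⟨H, hHne, rfl⟩
    by_cases ht : tInv ρ (G ⧸ H) = 0
    · simp [ht]
    have hTne : {k : ℕ | ∃ A : Set (G ⧸ H),
        Aperiodic A ∧ RhoMax ρ A ∧ Spans A ∧ A.ncard = k}.Nonempty := by
      by_contra hc
      rw [Set.not_nonempty_iff_eq_empty] at hc
      apply ht
      show sSup {k : ℕ | ∃ A : Set (G ⧸ H),
        Aperiodic A ∧ RhoMax ρ A ∧ Spans A ∧ A.ncard = k} = 0
      rw [hc, csSup_empty]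
      rfl
    have hmem := Nat.sSup_mem hTne (hbddT H)
    obtain ⟨Ab, hAp, hMax, hSp, hcard⟩ := hmem
    have hπs : Function.Surjective (QuotientAddGroup.mk' H) := QuotientAddGroup.mk'_surjective H
    have hASp : Spans ((QuotientAddGroup.mk' H) ⁻¹' Ab) := spans_preimage hHne hSp
    have hle : ρ ≤ diamPlus ((QuotientAddGroup.mk' H) ⁻¹' Ab) := by
      refine rho_le_diamPlus hASp hρ ?_
      intro hc
      apply hMax.1
      have h2 : (QuotientAddGroup.mk' H) '' (insert 0 ((QuotientAddGroup.mk' H) ⁻¹' Ab))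
          ⊆ insert 0 Ab := by
        rw [Set.image_insert_eq, map_zero, Set.image_preimage_eq Ab hπs]
      apply Set.eq_univ_of_univ_subset
      have h3 : (QuotientAddGroup.mk' H) ''
          (iterSum (insert 0 ((QuotientAddGroup.mk' H) ⁻¹' Ab)) (ρ - 1)) = Set.univ := by
        rw [hc, Set.image_univ, Set.range_eq_univ]
        exact hπs
      rw [← h3, image_iterSum]
      exact iterSum_subset h2 _
    refine le_csSup hbddL ⟨(QuotientAddGroup.mk' H) ⁻¹' Ab, hASp, hle, ?_⟩
    rw [ncard_preimage _ hπs, QuotientAddGroup.ker_mk', hcard]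
    rfl
end

section
/- Let p be a prime and ρ ∈ [2, p-1]. Then the maximum cardinality of a subset A ⊆ Z_p with A ≠ {0}, A nonempty, and (ρ-1)·(A ∪ {0}) ≠ Z_p equals ⌊(p-2)/(ρ-1)⌋ + 1. -/
open Pointwise

variable {G : Type*}

section Aux

set_option linter.unusedSectionVars false

variable {p : ℕ} [NeZero p]

private def iterFin (B : Finset (ZMod p)) : ℕ → Finset (ZMod p)
  | 0 => {0}
  | n + 1 => iterFin B n + B

private lemma coe_iterFin (B : Finset (ZMod p)) : ∀ n,
    (↑(iterFin B n) : Set (ZMod p)) = iterSum (↑B : Set (ZMod p)) n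
  | 0 => by simp [iterFin, iterSum]
  | n + 1 => by simp [iterFin, iterSum, Finset.coe_add, coe_iterFin B n]

private lemma card_iterFin (hp : p.Prime) {B : Finset (ZMod p)} (h0 : (0 : ZMod p) ∈ B) :
    ∀ n, min p (n * (B.card - 1) + 1) ≤ (iterFin B n).card
  | 0 => by
    simp only [iterFin, Finset.card_singleton, Nat.zero_mul]
    omega
  | n + 1 => by
    have hB : B.Nonempty := ⟨0, h0⟩
    have ih := card_iterFin hp h0 n
    have hI : (iterFin B n).Nonempty := by
      rw [← Finset.card_pos]
      have : 1 ≤ min p (n * (B.card - 1) + 1) := by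
        have := hp.two_le; omega
      omega
    have cd := ZMod.cauchy_davenport hp hI hB
    have hb : 1 ≤ B.card := Finset.card_pos.2 hB
    show min p ((n + 1) * (B.card - 1) + 1) ≤ (iterFin B n + B).card
    have : (n + 1) * (B.card - 1) = n * (B.card - 1) + (B.card - 1) := by ring
    omega

private lemma iterSum_cast_Iic (m : ℕ) :
    ∀ n, iterSum ((fun j : ℕ => (j : ZMod p)) '' Set.Iic m) n ⊆
      (fun j : ℕ => (j : ZMod p)) '' Set.Iic (n * m)
  | 0 => by
    intro x hx
    simp only [iterSum, Set.mem_singleton_iff] at hx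
    exact ⟨0, by simp [hx]⟩
  | n + 1 => by
    intro x hx
    simp only [iterSum] at hx
    rcases Set.mem_add.1 hx with ⟨y, hy, z, hz, rfl⟩
    obtain ⟨j, hj, rfl⟩ := iterSum_cast_Iic m n hy
    obtain ⟨i, hi, rfl⟩ := hz
    refine ⟨j + i, ?_, by push_cast; ring⟩
    simp only [Set.mem_Iic] at *
    have : (n + 1) * m = n * m + m := by ring
    omega

end Aux

theorem stmt11 (p : ℕ) (hp : p.Prime) (ρ : ℕ) (hρ : 2 ≤ ρ) (hρp : ρ ≤ p - 1) :
    sSup {k : ℕ | ∃ A : Set (ZMod p), A.Nonempty ∧ A ≠ {0} ∧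
        iterSum (insert 0 A) (ρ - 1) ≠ Set.univ ∧ A.ncard = k}
      = (p - 2) / (ρ - 1) + 1 := by
  haveI : Fact p.Prime := ⟨hp⟩
  have hp2 : 2 ≤ p := hp.two_le
  have hp3 : 3 ≤ p := by omega
  set s := ρ - 1 with hs
  have hs1 : 1 ≤ s := by omega
  have hsp : s ≤ p - 2 := by omega
  set m := (p - 2) / s with hm
  have hm1 : 1 ≤ m := by
    rw [hm, Nat.le_div_iff_mul_le (by omega)]; omega
  have hmp : m ≤ p - 2 := Nat.div_le_self _ _ |>.trans (le_refl _) |>.trans (by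
    exact Nat.le_of_eq rfl) |>.trans (le_refl _)
  -- bound: every element of the set is ≤ m + 1
  have hbound : ∀ k ∈ {k : ℕ | ∃ A : Set (ZMod p), A.Nonempty ∧ A ≠ {0} ∧
      iterSum (insert 0 A) s ≠ Set.univ ∧ A.ncard = k}, k ≤ m + 1 := by
    rintro k ⟨A, -, -, hA, rfl⟩
    classical
    set B : Finset (ZMod p) := (insert 0 A).toFinset with hB
    have hBcoe : (↑B : Set (ZMod p)) = insert 0 A := Set.coe_toFinset _
    have h0B : (0 : ZMod p) ∈ B := by rw [← Finset.mem_coe, hBcoe]; exact Set.mem_insert _ _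
    have hne : iterFin B s ≠ Finset.univ := by
      intro h
      apply hA
      rw [← hBcoe, ← coe_iterFin, h, Finset.coe_univ]
    have hlt : (iterFin B s).card < p := by
      have := Finset.card_lt_iff_ne_univ (iterFin B s) |>.2 hne
      simpa [ZMod.card p] using this
    have := card_iterFin hp h0B s
    have hcard : s * (B.card - 1) + 1 ≤ p - 1 := by omega
    have hBle : B.card ≤ m + 1 := by
      have h2 : s * (B.card - 1) ≤ p - 2 := by omega
      have := (Nat.le_div_iff_mul_le (show 0 < s by omega)).2 (by
        calc (B.card - 1) * s = s * (B.card - 1) := by ring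
        _ ≤ p - 2 := h2)
      omega
    have : A.ncard ≤ B.card := by
      rw [hB, ← Set.ncard_coe_finset, Set.coe_toFinset]
      exact Set.ncard_le_ncard (Set.subset_insert _ _) (Set.toFinite _)
    omega
  -- witness
  have hmem : m + 1 ∈ {k : ℕ | ∃ A : Set (ZMod p), A.Nonempty ∧ A ≠ {0} ∧
      iterSum (insert 0 A) s ≠ Set.univ ∧ A.ncard = k} := by
    refine ⟨(fun j : ℕ => (j : ZMod p)) '' Set.Iic m, ⟨0, ⟨0, by simp⟩⟩, ?_, ?_, ?_⟩
    · intro h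
      have h1 : (1 : ZMod p) ∈ (fun j : ℕ => (j : ZMod p)) '' Set.Iic m :=
        ⟨1, by simpa using hm1, by simp⟩
      rw [h] at h1
      exact one_ne_zero (Set.mem_singleton_iff.1 h1)
    · intro h
      have h0 : (0 : ZMod p) ∈ (fun j : ℕ => (j : ZMod p)) '' Set.Iic m := ⟨0, by simp⟩
      rw [Set.insert_eq_self.2 h0] at h
      have := iterSum_cast_Iic (p := p) m s
      rw [h] at this
      have hmem' : ((p - 1 : ℕ) : ZMod p) ∈ (fun j : ℕ => (j : ZMod p)) '' Set.Iic (s * m) :=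
        this (Set.mem_univ _)
      obtain ⟨j, hj, hjeq⟩ := hmem'
      have hsm : s * m ≤ p - 2 := by
        calc s * m = m * s := by ring
        _ ≤ p - 2 := (Nat.le_div_iff_mul_le (show 0 < s by omega)).1 (le_refl m)
      have hjlt : j < p := by simp only [Set.mem_Iic] at hj; omega
      have := congrArg ZMod.val hjeq
      rw [ZMod.val_natCast_of_lt hjlt, ZMod.val_natCast_of_lt (by omega)] at this
      simp only [Set.mem_Iic] at hj
      omega
    · have hinj : Set.InjOn (fun j : ℕ => (j : ZMod p)) (Set.Iic m) := by
        intro a ha b hb hab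
        simp only [Set.mem_Iic] at ha hb
        have := congrArg ZMod.val hab
        rwa [ZMod.val_natCast_of_lt (by omega), ZMod.val_natCast_of_lt (by omega)] at this
      rw [Set.ncard_image_of_injOn hinj,
        show (Set.Iic m : Set ℕ) = ↑(Finset.Iic m) by simp,
        Set.ncard_coe_finset, Nat.card_Iic]
  refine le_antisymm (csSup_le ⟨_, hmem⟩ hbound) (le_csSup ⟨m + 1, hbound⟩ hmem)
end

section
/- Let G be a finite abelian group with diam^+(G) ≥ 4 such that every divisor of |G| is congruent to 1 modulo 3. Then the maximum cardinality of an aperiodic 4-maximal generating set for G equals (|G| - 1)/3. -/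
open Pointwise

variable {G : Type*}

universe u

set_option linter.unusedSectionVars false

section Fibers
variable {G : Type u} [AddCommGroup G] [Finite G] (K : AddSubgroup G)

private abbrev qmap : G →+ G ⧸ K := QuotientAddGroup.mk' K

variable {K}

lemma qmap_zero_iff {g : G} : qmap K g = 0 ↔ g ∈ K := QuotientAddGroup.eq_zero_iff g

lemma qmap_eq_iff {a b : G} : qmap K a = qmap K b ↔ a - b ∈ K := by
  constructor
  · intro h
    rw [← qmap_zero_iff (K := K), map_sub, h, sub_self]
  · intro h
    have : qmap K (a - b) = 0 := qmap_zero_iff.2 h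
    rw [map_sub, sub_eq_zero] at this
    exact this

lemma fiber_eq_image (t : G ⧸ K) (a : G) (ha : qmap K a = t) :
    qmap K ⁻¹' {t} = (a + ·) '' (K : Set G) := by
  ext u
  simp only [Set.mem_preimage, Set.mem_singleton_iff, Set.mem_image, SetLike.mem_coe]
  constructor
  · intro h
    refine ⟨u - a, ?_, by abel⟩
    rw [← qmap_zero_iff (K := K), map_sub, h, ha, sub_self]
  · rintro ⟨k, hk, rfl⟩
    rw [map_add, qmap_zero_iff.2 hk, add_zero, ha]

lemma ncard_coe_subgroup : (K : Set G).ncard = Nat.card K := by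
  rw [← Nat.card_coe_set_eq]; rfl

lemma fiber_ncard (t : G ⧸ K) : (qmap K ⁻¹' {t}).ncard = Nat.card K := by
  obtain ⟨a, ha⟩ := QuotientAddGroup.mk'_surjective K t
  rw [fiber_eq_image t a ha, Set.ncard_image_of_injective _ (add_right_injective a),
    ncard_coe_subgroup]

lemma preimage_add (T : Set (G ⧸ K)) (Z : Set G) :
    qmap K ⁻¹' T + Z = qmap K ⁻¹' (T + qmap K '' Z) := by
  ext u
  constructor
  · rintro ⟨a, ha, z, hz, rfl⟩
    exact ⟨qmap K a, ha, qmap K z, Set.mem_image_of_mem _ hz, (map_add _ _ _).symm⟩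
  · rintro hu
    obtain ⟨t, ht, w, ⟨z, hz, rfl⟩, huw⟩ := hu
    refine ⟨u - z, ?_, z, hz, sub_add_cancel u z⟩
    show qmap K (u - z) ∈ T
    have : qmap K u = t + qmap K z := huw.symm
    rw [map_sub, this, add_sub_cancel_right]
    exact ht

lemma add_subgroup_eq_preimage (S : Set G) :
    S + (K : Set G) = qmap K ⁻¹' (qmap K '' S) := by
  ext u
  constructor
  · rintro ⟨s, hs, k, hk, rfl⟩
    refine ⟨s, hs, ?_⟩
    rw [map_add, qmap_zero_iff.2 hk, add_zero]
  · rintro ⟨s, hs, hsu⟩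
    refine ⟨s, hs, u - s, ?_, add_sub_cancel s u⟩
    rw [SetLike.mem_coe, ← qmap_zero_iff (K := K), map_sub, hsu, sub_self]

lemma preimage_ncard (T : Set (G ⧸ K)) :
    (qmap K ⁻¹' T).ncard = T.ncard * Nat.card K := by
  classical
  have key : ∀ p : T × K, qmap K ((p.1 : G ⧸ K).out + (p.2 : G)) = p.1 := by
    rintro ⟨t, k⟩
    have h2 : qmap K (k : G) = 0 := qmap_zero_iff.2 k.2
    have h1 : qmap K ((t : G ⧸ K).out) = (t : G ⧸ K) := QuotientAddGroup.out_eq' _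
    rw [map_add, h1, h2, add_zero]
  have e : T × K ≃ (qmap K ⁻¹' T) := by
    refine Equiv.ofBijective (fun p => ⟨(p.1 : G ⧸ K).out + (p.2 : G), ?_⟩) ⟨?_, ?_⟩
    · have := key p
      simp only [Set.mem_preimage, this]
      exact p.1.2
    · rintro ⟨t1, k1⟩ ⟨t2, k2⟩ h
      simp only [Subtype.mk_eq_mk] at h
      have ht : (t1 : G ⧸ K) = t2 := by
        have h0 := congrArg (qmap K) h
        rw [key ⟨t1, k1⟩, key ⟨t2, k2⟩] at h0
        exact h0
      have hout : (t1 : G ⧸ K).out = (t2 : G ⧸ K).out := by rw [ht]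
      have hk : (k1 : G) = k2 := by rw [hout] at h; exact add_left_cancel h
      simp only [Prod.mk.injEq]
      exact ⟨Subtype.ext ht, Subtype.ext hk⟩
    · rintro ⟨u, hu⟩
      refine ⟨⟨⟨qmap K u, hu⟩, ⟨u - (qmap K u : G ⧸ K).out, ?_⟩⟩, ?_⟩
      · have h1 : qmap K (Quotient.out (qmap K u)) = qmap K u := QuotientAddGroup.out_eq' _
        rw [← qmap_zero_iff (K := K), map_sub, h1, sub_self]
      · simp only [Subtype.mk_eq_mk]; abel
  have hcongr := Nat.card_congr e
  rw [Nat.card_prod] at hcongr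
  rw [← Nat.card_coe_set_eq, ← hcongr, ← Nat.card_coe_set_eq]

end Fibers
section Fibers2
variable {G : Type u} [AddCommGroup G] [Finite G] {K : AddSubgroup G}

lemma ncard_eq_sum_fibers (S : Set G) :
    S.ncard = ∑ t ∈ (Set.toFinite (qmap K '' S)).toFinset, (S ∩ qmap K ⁻¹' {t}).ncard := by
  classical
  rw [Set.ncard_eq_toFinset_card S (Set.toFinite S)]
  rw [Finset.card_eq_sum_card_fiberwise (f := qmap K)
    (t := (Set.toFinite (qmap K '' S)).toFinset)
    (fun x hx => by
      simp only [Finset.mem_coe, Set.Finite.mem_toFinset] at hx ⊢; exact Set.mem_image_of_mem _ hx)]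
  refine Finset.sum_congr rfl fun t _ => ?_
  rw [Set.ncard_eq_toFinset_card _ (Set.toFinite _)]
  congr 1
  ext u
  rw [Finset.mem_filter, Set.Finite.mem_toFinset, Set.Finite.mem_toFinset]
  rfl

lemma subset_fiber_nonempty_disjoint {F X Y : Set G} (hX : X ⊆ F) (hY : Y ⊆ F)
    (hcard : F.ncard < X.ncard + Y.ncard) : (X ∩ Y).Nonempty := by
  rw [Set.nonempty_iff_ne_empty]
  intro hdisj
  have hu : (X ∪ Y).ncard = X.ncard + Y.ncard := by
    have := Set.ncard_union_add_ncard_inter X Y (Set.toFinite X) (Set.toFinite Y)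
    rw [hdisj] at this
    simpa using this
  have := Set.ncard_le_ncard (Set.union_subset hX hY) (Set.toFinite F)
  omega

lemma fiber_pigeonhole {α β : G ⧸ K} {X Y : Set G}
    (hX : X ⊆ qmap K ⁻¹' {α}) (hY : Y ⊆ qmap K ⁻¹' {β})
    (hcard : Nat.card K < X.ncard + Y.ncard) : X + Y = qmap K ⁻¹' {α + β} := by
  apply Set.Subset.antisymm
  · rintro _ ⟨a, ha, b, hb, rfl⟩
    have h1 : qmap K a = α := hX ha
    have h2 : qmap K b = β := hY hb
    simp only [Set.mem_preimage, Set.mem_singleton_iff, map_add, h1, h2]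
  · intro c hc
    have hc' : qmap K c = α + β := hc
    set Y' := (fun y => c - y) '' Y with hY'
    have hY'sub : Y' ⊆ qmap K ⁻¹' {α} := by
      rintro _ ⟨y, hy, rfl⟩
      have : qmap K y = β := hY hy
      simp only [Set.mem_preimage, Set.mem_singleton_iff, map_sub, hc', this]
      abel
    have hY'card : Y'.ncard = Y.ncard := by
      apply Set.ncard_image_of_injective
      intro a b hab
      simpa using hab
    have hne : (X ∩ Y').Nonempty := by
      apply subset_fiber_nonempty_disjoint hX hY'sub
      rw [fiber_ncard, hY'card]; exact hcard
    obtain ⟨w, hwX, y, hy, hwy⟩ := hne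
    refine ⟨w, hwX, y, hy, ?_⟩
    show w + y = c
    rw [← hwy]; exact sub_add_cancel c y

-- stabilizer lemmas
lemma mem_stab_iff {g : G} {A : Set G} : g ∈ AddAction.stabilizer G A ↔ g +ᵥ A = A :=
  Iff.rfl

lemma stab_add_mem {g : G} {A : Set G} (hg : g ∈ AddAction.stabilizer G A) {a : G}
    (ha : a ∈ A) : a + g ∈ A := by
  have : g +ᵥ A = A := hg
  rw [← this]
  exact ⟨a, ha, add_comm g a⟩

lemma mem_stab_of_forall {g : G} {A : Set G} (h : ∀ a ∈ A, a + g ∈ A) :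
    g ∈ AddAction.stabilizer G A := by
  rw [mem_stab_iff]
  have hsub : g +ᵥ A ⊆ A := by
    rintro _ ⟨a, ha, rfl⟩
    show g + a ∈ A
    rw [add_comm]
    exact h a ha
  apply Set.eq_of_subset_of_ncard_le hsub _ (Set.toFinite A)
  rw [Set.ncard_vadd_set]

lemma add_stab_coe_eq (A : Set G) (hA : A.Nonempty) :
    A + (AddAction.stabilizer G A : Set G) = A := by
  apply Set.Subset.antisymm
  · rintro _ ⟨a, ha, k, hk, rfl⟩
    exact stab_add_mem hk ha
  · intro a ha
    exact ⟨a, ha, 0, zero_mem _, add_zero a⟩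

end Fibers2
section MinPair
variable {G : Type u} [AddCommGroup G] [Finite G]

/-- Dyson e-transform minimal pair: a maximal "pair" `(A₁, V)` with `A₁ + V ⊆ S + S`,
which is blocked under all e-transforms. -/
lemma exists_min_pair (S : Set G) (hS : S.Nonempty) :
    ∃ A₁ V : Set G, S ⊆ A₁ ∧ V ⊆ S ∧ V.Nonempty ∧ A₁ + V ⊆ S + S ∧
      2 * S.ncard ≤ A₁.ncard + V.ncard ∧
      (∀ a ∈ A₁, ∀ v ∈ V, ∀ v' ∈ V, a + v' - v ∈ A₁) := by
  classical
  set Pp : Set G → Set G → Prop := fun U V =>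
    S ⊆ U ∧ V ⊆ S ∧ V.Nonempty ∧ U + V ⊆ S + S ∧ 2 * S.ncard ≤ U.ncard + V.ncard with hPp
  have hP0 : Pp S S := ⟨le_refl _, le_refl _, hS, le_refl _, by omega⟩
  set Pc : Set ℕ := {m | ∃ U V, Pp U V ∧ V.ncard = m} with hPc
  have hPc0 : S.ncard ∈ Pc := ⟨S, S, hP0, rfl⟩
  obtain ⟨A₁, V, hPair, hVcard⟩ := Nat.sInf_mem (⟨S.ncard, hPc0⟩ : Pc.Nonempty)
  obtain ⟨hSU, hVS, hVne, hsum, hcard⟩ := hPair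
  refine ⟨A₁, V, hSU, hVS, hVne, hsum, hcard, ?_⟩
  by_contra hbad
  push_neg at hbad
  obtain ⟨a, ha, v, hv, v', hv', hnot⟩ := hbad
  set e : G := a - v with he
  set V' : Set G := {w ∈ V | w + e ∈ A₁} with hV'
  set W : Set G := ((· + e) '' V) \ A₁ with hW
  set U' : Set G := A₁ ∪ W with hU'
  -- basic membership facts
  have hvV' : v ∈ V' := by
    refine ⟨hv, ?_⟩
    have : v + e = a := by rw [he]; abel
    rw [this]; exact ha
  have hv'V' : v' ∉ V' := by
    rintro ⟨-, hmem⟩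
    apply hnot
    have : v' + e = a + v' - v := by rw [he]; abel
    rwa [this] at hmem
  have hV'V : V' ⊆ V := fun w hw => hw.1
  have hV'lt : V'.ncard < V.ncard := by
    apply Set.ncard_lt_ncard _ (Set.toFinite V)
    exact ⟨hV'V, fun hsub => hv'V' (hsub hv')⟩
  -- the transform pair is in Pp
  have hWcard : W.ncard = V.ncard - V'.ncard := by
    have himg : W = (· + e) '' (V \ V') := by
      ext u
      simp only [hW, Set.mem_diff, Set.mem_image]
      constructor
      · rintro ⟨⟨w, hwV, rfl⟩, hnA⟩
        exact ⟨w, ⟨hwV, fun hc => hnA hc.2⟩, rfl⟩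
      · rintro ⟨w, ⟨hwV, hwn⟩, rfl⟩
        refine ⟨⟨w, hwV, rfl⟩, fun hc => hwn ⟨hwV, hc⟩⟩
    rw [himg, Set.ncard_image_of_injective _ (add_left_injective e),
      Set.ncard_diff hV'V (Set.toFinite V')]
  have hU'card : U'.ncard = A₁.ncard + V.ncard - V'.ncard := by
    rw [hU', Set.ncard_union_eq (Set.disjoint_sdiff_right) (Set.toFinite _) (Set.toFinite _),
      hWcard]
    have := Set.ncard_le_ncard hV'V (Set.toFinite V)
    omega
  have hPp' : Pp U' V' := by
    refine ⟨hSU.trans Set.subset_union_left, hV'V.trans hVS, ⟨v, hvV'⟩, ?_, ?_⟩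
    · rintro _ ⟨u, hu, w, hw, rfl⟩
      rcases hu with hu | hu
      · exact hsum ⟨u, hu, w, hV'V hw, rfl⟩
      · obtain ⟨⟨z, hz, rfl⟩, -⟩ := hu
        show z + e + w ∈ S + S
        have heq : z + e + w = (w + e) + z := by abel
        rw [heq]
        exact hsum ⟨w + e, hw.2, z, hz, rfl⟩
    · have hV'le := Set.ncard_le_ncard hV'V (Set.toFinite V)
      rw [hU'card]
      omega
  have : sInf Pc ≤ V'.ncard := Nat.sInf_le ⟨U', V', hPp', rfl⟩
  omega

end MinPair
section Phi

lemma three_nsmul_eq {Q : Type u} [AddCommGroup Q] (z : Q) : 3 • z = z + z + z := by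
  abel

lemma phi : ∀ (n : ℕ) (G : Type u) [AddCommGroup G] [Finite G], Nat.card G = n →
    (∀ d : ℕ, d ∣ n → d % 3 = 1) →
    ∀ S : Set G, S.Nonempty → ∀ x : G, x ∉ S + S + S → 3 * S.ncard ≤ n - 1 := by
  intro n
  induction n using Nat.strong_induction_on with
  | _ n IH =>
  intro G instG instF hcard hdiv S hS x hx
  classical
  have hn3 : n % 3 = 1 := hdiv n dvd_rfl
  have hn1 : 1 ≤ n := hcard ▸ Nat.card_pos
  obtain ⟨s₀, hs₀⟩ := hS
  have hSne : S.Nonempty := ⟨s₀, hs₀⟩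
  rcases eq_or_lt_of_le hn1 with hn1' | hn1'
  · haveI : Subsingleton G := Nat.card_eq_one_iff_unique.mp (hcard.trans hn1'.symm) |>.1
    exact absurd ⟨s₀ + s₀, ⟨s₀, hs₀, s₀, hs₀, rfl⟩, s₀, hs₀, Subsingleton.elim _ _⟩ hx
  obtain ⟨A₁, V, hSA, hVS, hVne, hsum, hcard2, hblocked⟩ := exists_min_pair S hSne
  obtain ⟨v₁, hv₁⟩ := hVne
  set K : AddSubgroup G := AddAction.stabilizer G A₁ with hK
  have hA₁x : ∀ a ∈ A₁, ∀ s ∈ S, a + v₁ + s ≠ x := by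
    intro a ha s hs heq
    exact hx ⟨a + v₁, hsum ⟨a, ha, v₁, hv₁, rfl⟩, s, hs, heq⟩
  have hA₁disj : Disjoint A₁ ((fun u => x - v₁ - u) '' (S + (K : Set G))) := by
    rw [Set.disjoint_right]
    rintro _ ⟨u, ⟨s, hs, k, hk, rfl⟩, rfl⟩ hmem
    refine hA₁x (x - v₁ - (s + k) + k) (stab_add_mem hk hmem) s hs ?_
    abel
  have hA₁card : A₁.ncard + (S + (K : Set G)).ncard ≤ n := by
    have himg : ((fun u => x - v₁ - u) '' (S + (K : Set G))).ncard = (S + (K : Set G)).ncard :=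
      Set.ncard_image_of_injective _ (fun a b hab => by simpa [sub_right_inj] using hab)
    calc A₁.ncard + (S + (K : Set G)).ncard
        = (A₁ ∪ ((fun u => x - v₁ - u) '' (S + (K : Set G)))).ncard := by
          rw [Set.ncard_union_eq hA₁disj (Set.toFinite _) (Set.toFinite _), himg]
      _ ≤ (Set.univ : Set G).ncard := Set.ncard_le_ncard (Set.subset_univ _) (Set.toFinite _)
      _ = n := by rw [Set.ncard_univ, hcard]
  have hSSK : S ⊆ S + (K : Set G) := fun s hs => ⟨s, hs, 0, zero_mem _, add_zero s⟩
  have hSKS : S.ncard ≤ (S + (K : Set G)).ncard := Set.ncard_le_ncard hSSK (Set.toFinite _)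
  by_cases hVsmall : V.ncard + S.ncard ≤ (S + (K : Set G)).ncard + 1
  · omega
  push_neg at hVsmall
  have hV2 : 2 ≤ V.ncard := by omega
  obtain ⟨v₂, hv₂, hv₂ne⟩ := Set.exists_ne_of_one_lt_ncard (s := V) (by omega) v₁
  have hVK : ∀ v ∈ V, ∀ v' ∈ V, v' - v ∈ K := by
    intro v hv v' hv'
    apply mem_stab_of_forall
    intro a ha
    have := hblocked a ha v hv v' hv'
    rwa [add_sub_assoc] at this
  have hk2 : 2 ≤ Nat.card K := by
    rw [← ncard_coe_subgroup]
    have hsub : ({v₂ - v₁, 0} : Set G) ⊆ (K : Set G) := by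
      rintro y (rfl | rfl)
      · exact hVK v₁ hv₁ v₂ hv₂
      · exact zero_mem K
    calc 2 = ({v₂ - v₁, 0} : Set G).ncard := (Set.ncard_pair (sub_ne_zero.2 hv₂ne)).symm
      _ ≤ _ := Set.ncard_le_ncard hsub (Set.toFinite _)
  have hKlt : Nat.card K < n := by
    rw [← ncard_coe_subgroup]
    have hne : ∃ g, g ∉ K := by
      by_contra hall
      push_neg at hall
      have hA₁univ : ∀ g : G, g ∈ A₁ := by
        intro g
        have := stab_add_mem (hall (g - s₀)) (hSA hs₀)
        rwa [add_sub_cancel] at this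
      exact hA₁x (x - v₁ - s₀) (hA₁univ _) s₀ hs₀ (by abel)
    obtain ⟨g, hg⟩ := hne
    calc (K : Set G).ncard < (Set.univ : Set G).ncard := by
          apply Set.ncard_lt_ncard _ (Set.toFinite _)
          exact ⟨Set.subset_univ _, fun hsub => hg (hsub (Set.mem_univ g))⟩
      _ = n := by rw [Set.ncard_univ, hcard]
  set kk := Nat.card K with hkk
  set q := Nat.card (G ⧸ K) with hq
  have hnq : n = q * kk := by
    rw [← hcard]; exact AddSubgroup.card_eq_card_quotient_mul_card_addSubgroup K
  have hq0 : q ≠ 0 := by rintro h; rw [h, zero_mul] at hnq; omega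
  have hqone : q ≠ 1 := by rintro h; rw [h, one_mul] at hnq; omega
  have hq1 : 1 < q := by omega
  have hqlt : q < n := by
    have : q * 2 ≤ q * kk := Nat.mul_le_mul_left q hk2
    omega
  have hdivq : ∀ d : ℕ, d ∣ q → d % 3 = 1 := fun d hd => hdiv d (hd.trans ⟨kk, hnq⟩)
  have hdivk : ∀ d : ℕ, d ∣ kk → d % 3 = 1 := fun d hd =>
    hdiv d (hd.trans ⟨q, by rw [hnq]; ring⟩)
  set T : Set (G ⧸ K) := qmap K '' S with hT
  have hSKcard : (S + (K : Set G)).ncard = T.ncard * kk := by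
    rw [add_subgroup_eq_preimage S, preimage_ncard]
  set tb := T.ncard with htb
  set m : (G ⧸ K) → ℕ := fun t => (S ∩ qmap K ⁻¹' {t}).ncard with hm
  have hm_le : ∀ t, m t ≤ kk := fun t => by
    calc m t ≤ (qmap K ⁻¹' {t}).ncard :=
          Set.ncard_le_ncard Set.inter_subset_right (Set.toFinite _)
      _ = kk := fiber_ncard t
  have hVkk : V.ncard ≤ kk := by
    have hsub : V ⊆ (v₁ + ·) '' (K : Set G) := by
      intro v hv
      refine ⟨v - v₁, hVK v₁ hv₁ v hv, ?_⟩
      show v₁ + (v - v₁) = v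
      abel
    calc V.ncard ≤ _ := Set.ncard_le_ncard hsub (Set.toFinite _)
      _ = (K : Set G).ncard := Set.ncard_image_of_injective _ (add_right_injective v₁)
      _ = kk := ncard_coe_subgroup
  have hsum_m : S.ncard = ∑ t ∈ (Set.toFinite T).toFinset, m t := ncard_eq_sum_fibers S
  have hfull : ∀ α ∈ T, ∀ β ∈ T, α ≠ β →
      (S ∩ qmap K ⁻¹' {α}) + (S ∩ qmap K ⁻¹' {β}) = qmap K ⁻¹' {α + β} := by
    intro α hα β hβ hne
    apply fiber_pigeonhole Set.inter_subset_right Set.inter_subset_right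
    have hαF : α ∈ (Set.toFinite T).toFinset := (Set.Finite.mem_toFinset _).2 hα
    have hβF : β ∈ ((Set.toFinite T).toFinset.erase α) :=
      Finset.mem_erase.2 ⟨hne.symm, (Set.Finite.mem_toFinset _).2 hβ⟩
    have hsplit1 : m α + ∑ t ∈ (Set.toFinite T).toFinset.erase α, m t
        = ∑ t ∈ (Set.toFinite T).toFinset, m t := Finset.add_sum_erase _ m hαF
    have hsplit2 : m β + ∑ t ∈ ((Set.toFinite T).toFinset.erase α).erase β, m t
        = ∑ t ∈ (Set.toFinite T).toFinset.erase α, m t := Finset.add_sum_erase _ m hβF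
    have hrest : ∑ t ∈ ((Set.toFinite T).toFinset.erase α).erase β, m t
        ≤ (((Set.toFinite T).toFinset.erase α).erase β).card * kk := by
      calc _ ≤ (((Set.toFinite T).toFinset.erase α).erase β).card • kk :=
            Finset.sum_le_card_nsmul _ _ _ (fun i _ => hm_le i)
        _ = _ := by rw [smul_eq_mul]
    have hcardF : (Set.toFinite T).toFinset.card = tb :=
      (Set.ncard_eq_toFinset_card T (Set.toFinite T)).symm
    have htb2 : 2 ≤ tb := by
      rw [← hcardF]
      have hss : ({α, β} : Finset (G ⧸ K)) ⊆ (Set.toFinite T).toFinset := by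
        intro y hy
        rcases Finset.mem_insert.1 hy with rfl | hy
        · exact hαF
        · rw [Finset.mem_singleton.1 hy]
          exact (Set.Finite.mem_toFinset _).2 hβ
      calc 2 = ({α, β} : Finset (G ⧸ K)).card := (Finset.card_pair hne).symm
        _ ≤ _ := Finset.card_le_card hss
    have hcarderase : (((Set.toFinite T).toFinset.erase α).erase β).card = tb - 2 := by
      rw [Finset.card_erase_of_mem hβF, Finset.card_erase_of_mem hαF, hcardF]
      omega
    rw [hcarderase] at hrest
    obtain ⟨c, hc⟩ : ∃ c, tb = c + 2 := ⟨tb - 2, by omega⟩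
    have hexp : tb * kk = c * kk + 2 * kk := by rw [hc]; ring
    have hexp2 : tb - 2 = c := by omega
    rw [hexp2] at hrest
    rw [hSKcard, hexp] at hVsmall
    show kk < m α + m β
    set ckk := c * kk with hckk
    omega
  have hpair : ∀ α ∈ T, ∀ β ∈ T, ∀ γ ∈ T, α + β + γ = qmap K x → α ≠ β → False := by
    intro α hα β hβ γ hγ hsum3 hne
    have hXY := hfull α hα β hβ hne
    obtain ⟨sγ, hsγS, hsγfib⟩ : ∃ s, s ∈ S ∧ qmap K s = γ := hγ
    have hxz : x - sγ ∈ qmap K ⁻¹' {α + β} := by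
      simp only [Set.mem_preimage, Set.mem_singleton_iff, map_sub, hsγfib]
      rw [← hsum3]; abel
    rw [← hXY] at hxz
    obtain ⟨u, hu, w, hw, huw⟩ := hxz
    have huw' : u + w = x - sγ := huw
    refine hx ⟨u + w, ⟨u, hu.1, w, hw.1, rfl⟩, sγ, hsγS, ?_⟩
    show u + w + sγ = x
    rw [huw']; exact sub_add_cancel x sγ
  have h3inj : Function.Injective (fun y : G ⧸ K => 3 • y) := by
    intro y y' hyy
    simp only at hyy
    have hsub : 3 • (y - y') = 0 := by rw [smul_sub, hyy, sub_self]
    have hd3 : addOrderOf (y - y') ∣ 3 := addOrderOf_dvd_of_nsmul_eq_zero hsub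
    have hdq : addOrderOf (y - y') ∣ q := by rw [hq]; exact addOrderOf_dvd_natCard _
    rcases (Nat.prime_three).eq_one_or_self_of_dvd _ hd3 with h1 | h3
    · exact sub_eq_zero.1 (AddMonoid.addOrderOf_eq_one_iff.1 h1)
    · have := hdivq _ hdq
      rw [h3] at this
      omega
  obtain ⟨δ, hδ⟩ := (Finite.injective_iff_surjective.1 h3inj) (qmap K x)
  simp only at hδ
  have halleq : ∀ α ∈ T, ∀ β ∈ T, ∀ γ ∈ T, α + β + γ = qmap K x → α = δ := by
    intro α hα β hβ γ hγ hsum3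
    by_cases hab : α = β
    · by_cases hag : α = γ
      · subst hab; subst hag
        apply h3inj
        simp only
        rw [hδ, ← hsum3, three_nsmul_eq]
      · exact (hpair α hα γ hγ β hβ (by rw [← hsum3]; abel) hag).elim
    · exact (hpair α hα β hβ γ hγ hsum3 hab).elim
  by_cases hδT : δ ∈ T
  · -- δ ∈ T : fiber bound via IH on K, rest via IH on quotient
    obtain ⟨t₀, ht₀⟩ : (S ∩ qmap K ⁻¹' {δ}).Nonempty := by
      obtain ⟨s, hsS, hsψ⟩ := hδT
      exact ⟨s, hsS, by
        simp only [Set.mem_preimage, Set.mem_singleton_iff]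
        exact hsψ⟩
    have hfib : 3 * m δ ≤ kk - 1 := by
      set X'' : Set ↥K := {k' : ↥K | t₀ + (k' : G) ∈ S ∩ qmap K ⁻¹' {δ}} with hX''
      have himg : S ∩ qmap K ⁻¹' {δ} = (fun k' : ↥K => t₀ + (k' : G)) '' X'' := by
        ext u
        constructor
        · intro hu
          have hker : u - t₀ ∈ K := by
            rw [← qmap_zero_iff (K := K), map_sub]
            have h1 : qmap K u = δ := hu.2
            have h2 : qmap K t₀ = δ := ht₀.2
            rw [h1, h2, sub_self]
          refine ⟨⟨u - t₀, hker⟩, ?_, by simp⟩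
          show t₀ + (u - t₀) ∈ S ∩ _
          rwa [add_sub_cancel]
        · rintro ⟨k', hk', rfl⟩
          exact hk'
      have hinj : Function.Injective (fun k' : ↥K => t₀ + (k' : G)) := by
        intro a b hab
        exact Subtype.ext (by simpa using hab)
      have hmX : m δ = X''.ncard := by
        rw [hm]
        simp only
        rw [himg, Set.ncard_image_of_injective _ hinj]
      have hX''ne : X''.Nonempty := ⟨0, by
        show t₀ + ((0 : ↥K) : G) ∈ S ∩ _
        simpa using ht₀⟩
      have hξK : x - (t₀ + t₀ + t₀) ∈ K := by
        rw [← qmap_zero_iff (K := K), map_sub, map_add, map_add]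
        have h2 : qmap K t₀ = δ := ht₀.2
        rw [h2, ← hδ, three_nsmul_eq, sub_self]
      have hξ : (⟨x - (t₀ + t₀ + t₀), hξK⟩ : ↥K) ∉ X'' + X'' + X'' := by
        rintro ⟨w, ⟨k1, h1, k2, h2, rfl⟩, k3, h3, hs3⟩
        have hcoe : (k1 : G) + k2 + k3 = x - (t₀ + t₀ + t₀) := by
          have := congrArg (fun z : ↥K => (z : G)) hs3
          simpa using this
        apply hx
        refine ⟨(t₀ + k1) + (t₀ + k2), ⟨t₀ + k1, h1.1, t₀ + k2, h2.1, rfl⟩,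
          t₀ + k3, h3.1, ?_⟩
        show (t₀ + (k1 : G)) + (t₀ + (k2 : G)) + (t₀ + (k3 : G)) = x
        have heq : (t₀ + (k1 : G)) + (t₀ + (k2 : G)) + (t₀ + (k3 : G))
            = ((k1 : G) + (k2 : G) + (k3 : G)) + (t₀ + t₀ + t₀) := by abel
        rw [heq, hcoe]
        exact sub_add_cancel x _
      have := IH kk hKlt ↥K rfl hdivk X'' hX''ne _ hξ
      omega
    by_cases hU : (T \ {δ}).Nonempty
    · -- main subcase
      have hxU : qmap K x ∉ (T \ {δ}) + (T \ {δ}) + (T \ {δ}) := by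
        rintro ⟨w, ⟨α, hα, β, hβ, rfl⟩, γ, hγ, hsum3⟩
        exact hα.2 (halleq α hα.1 β hβ.1 γ hγ.1 hsum3)
      have h3U := IH q hqlt (G ⧸ K) hq.symm hdivq _ hU _ hxU
      have hUcard : (T \ {δ}).ncard = tb - 1 := by
        rw [Set.ncard_diff_singleton_of_mem hδT]
      rw [hUcard] at h3U
      -- sum split
      have hδF : δ ∈ (Set.toFinite T).toFinset := (Set.Finite.mem_toFinset _).2 hδT
      have hsplit : m δ + ∑ t ∈ (Set.toFinite T).toFinset.erase δ, m t
          = ∑ t ∈ (Set.toFinite T).toFinset, m t := Finset.add_sum_erase _ m hδF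
      have hcardF : (Set.toFinite T).toFinset.card = tb :=
        (Set.ncard_eq_toFinset_card T (Set.toFinite T)).symm
      have hrest : ∑ t ∈ (Set.toFinite T).toFinset.erase δ, m t ≤ (tb - 1) * kk := by
        calc _ ≤ ((Set.toFinite T).toFinset.erase δ).card • kk :=
              Finset.sum_le_card_nsmul _ _ _ (fun i _ => hm_le i)
          _ = ((Set.toFinite T).toFinset.erase δ).card * kk := by rw [smul_eq_mul]
          _ = (tb - 1) * kk := by rw [Finset.card_erase_of_mem hδF, hcardF]
      have htb1 : 1 ≤ tb := by
        have : δ ∈ T := hδT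
        have := Set.ncard_pos (Set.toFinite T) |>.2 ⟨δ, this⟩
        omega
      -- 3|S| ≤ 3 mδ + 3 (tb-1) kk ≤ kk - 1 + (q-1) kk = n - 1
      have hS3 : 3 * S.ncard ≤ 3 * m δ + 3 * ((tb - 1) * kk) := by omega
      have h3' : 3 * ((tb - 1) * kk) = (3 * (tb - 1)) * kk := by ring
      have h4 : (3 * (tb - 1)) * kk ≤ (q - 1) * kk := Nat.mul_le_mul_right kk h3U
      have h5 : (q - 1) * kk = q * kk - kk := by rw [Nat.sub_mul, one_mul]
      omega
    · -- T = {δ}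
      rw [Set.not_nonempty_iff_eq_empty, Set.diff_eq_empty] at hU
      have hSfib : S = S ∩ qmap K ⁻¹' {δ} := by
        apply Set.Subset.antisymm _ Set.inter_subset_left
        intro s hs
        refine ⟨hs, ?_⟩
        have : qmap K s ∈ T := Set.mem_image_of_mem _ hs
        have := hU this
        simpa using this
      have : S.ncard = m δ := by rw [hm]; simp only; rw [← hSfib]
      omega
  · -- δ ∉ T : quotient IH directly
    have hxT : qmap K x ∉ T + T + T := by
      rintro ⟨w, ⟨α, hα, β, hβ, rfl⟩, γ, hγ, hsum3⟩
      exact hδT (halleq α hα β hβ γ hγ hsum3 ▸ hα)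
    have h3tb := IH q hqlt (G ⧸ K) hq.symm hdivq T (hSne.image _) _ hxT
    have hle1 : S.ncard ≤ tb * kk := by
      rw [htb, ← hSKcard]; exact hSKS
    have h2 : 3 * S.ncard ≤ (3 * tb) * kk := by
      calc 3 * S.ncard ≤ 3 * (tb * kk) := by omega
        _ = (3 * tb) * kk := by ring
    have h3 : (3 * tb) * kk ≤ (q - 1) * kk := Nat.mul_le_mul_right kk h3tb
    have h4 : (q - 1) * kk = q * kk - kk := by rw [Nat.sub_mul, one_mul]
    omega

end Phi
section Build

lemma build : ∀ (n : ℕ) (G : Type u) [AddCommGroup G] [Finite G], Nat.card G = n →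
    (∀ d : ℕ, d ∣ n → d % 3 = 1) →
    ∃ (S : Set G) (x δ : G), S.ncard = (n - 1) / 3 ∧ x ∉ S + S + S ∧
      x = δ + δ + δ ∧ δ ∉ S ∧ δ + δ ∉ S + S ∧ AddSubgroup.closure S = ⊤ ∧
      (n = 1 ∨ 0 ∈ S) := by
  intro n
  induction n using Nat.strong_induction_on with
  | _ n IH =>
  intro G instG instF hcard hdiv
  classical
  by_cases hn1 : n = 1
  · -- trivial group
    haveI : Subsingleton G := Nat.card_eq_one_iff_unique.mp (hcard.trans hn1) |>.1
    refine ⟨∅, 0, 0, ?_, ?_, ?_, ?_, ?_, ?_, Or.inl hn1⟩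
    · simp [hn1]
    · simp
    · simp
    · simp
    · simp
    · apply AddSubgroup.eq_top_iff' _ |>.2
      intro y
      rw [Subsingleton.elim y 0]
      exact zero_mem _
  -- nontrivial case
  have hn0 : 1 ≤ n := hcard ▸ Nat.card_pos
  have hn2 : 2 ≤ n := by omega
  set p := n.minFac with hpdef
  have hp : p.Prime := Nat.minFac_prime hn1
  have hpdvd : p ∣ n := Nat.minFac_dvd n
  have hp3 : p % 3 = 1 := hdiv p hpdvd
  have hp7 : 7 ≤ p := by
    have hp2 : 2 ≤ p := hp.two_le
    by_contra hlt
    push_neg at hlt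
    interval_cases p
    · omega
    · omega
    · exact absurd hp (by norm_num)
    · omega
    · exact absurd hp (by norm_num)
  set k' := (p - 1) / 3 with hk'def
  have h3k' : 3 * k' = p - 1 := by omega
  have hk'2 : 2 ≤ k' := by omega
  -- element of prime order p
  haveI := Fintype.ofFinite G
  haveI : Fact p.Prime := ⟨hp⟩
  obtain ⟨g, horder⟩ := exists_prime_addOrderOf_dvd_card (G := G) p
    (by rwa [← Nat.card_eq_fintype_card, hcard])
  set H := AddSubgroup.zmultiples g with hHdef
  have hHcard : Nat.card H = p := by rw [hHdef, Nat.card_zmultiples, horder]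
  set q := Nat.card (G ⧸ H) with hqdef
  have hnq : n = q * p := by
    rw [← hcard, ← hHcard]
    exact AddSubgroup.card_eq_card_quotient_mul_card_addSubgroup H
  have hq0 : 1 ≤ q := hqdef ▸ Nat.card_pos
  have hqlt : q < n := by
    have h1 : q * 2 ≤ q * p := Nat.mul_le_mul_left q hp.two_le
    omega
  have hdivq : ∀ d : ℕ, d ∣ q → d % 3 = 1 := fun d hd => hdiv d (hd.trans ⟨p, hnq⟩)
  have hq3 : q % 3 = 1 := hdivq q dvd_rfl
  obtain ⟨Sb, xb, db, hSbcard, hxb, hxdb, hdbS, h2db, hspanb, h01b⟩ :=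
    IH q hqlt (G ⧸ H) hqdef.symm hdivq
  -- lift of db (choose 0 in the degenerate case)
  obtain ⟨b, hb, hb0⟩ : ∃ b : G, qmap H b = db ∧ (q = 1 → b = 0) := by
    by_cases hq1 : q = 1
    · haveI : Subsingleton (G ⧸ H) := Nat.card_eq_one_iff_unique.mp (hqdef.symm.trans hq1) |>.1
      exact ⟨0, Subsingleton.elim _ _, fun _ => rfl⟩
    · obtain ⟨b, hb⟩ := QuotientAddGroup.mk'_surjective H db
      exact ⟨b, hb, fun h => absurd h hq1⟩
  -- basic coordinate machinery
  have hpg : p • g = 0 := by rw [← horder]; exact addOrderOf_nsmul_eq_zero g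
  have hcoord : ∀ i j : ℕ, i < p → j < p → i • g = j • g → i = j := by
    have key : ∀ i j : ℕ, i ≤ j → j < p → i • g = j • g → i = j := by
      intro i j hij hjp heq
      obtain ⟨c, rfl⟩ := Nat.le.dest hij
      have : c • g = 0 := by
        have h2 : i • g + c • g = i • g + 0 := by
          rw [← add_nsmul, add_zero]
          exact heq.symm
        exact add_left_cancel h2
      have hdvd : p ∣ c := by
        rw [← horder]
        exact addOrderOf_dvd_of_nsmul_eq_zero this
      have : c = 0 := by
        rcases Nat.eq_zero_of_dvd_of_lt hdvd (by omega) with h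
        · exact h
      omega
    intro i j hip hjp heq
    rcases le_total i j with h | h
    · exact key i j h hjp heq
    · exact (key j i h hip heq.symm).symm
  have hψg : qmap H g = 0 := qmap_zero_iff.2 (AddSubgroup.mem_zmultiples g)
  have hψjg : ∀ j : ℕ, qmap H (j • g) = 0 := fun j => by
    rw [map_nsmul, hψg, smul_zero]
  -- define the pieces
  set C₀ : Set G := (fun j : ℕ => b + j • g) '' Set.Iio k' with hC₀def
  set F : Set G := qmap H ⁻¹' Sb with hFdef
  set S : Set G := F ∪ C₀ with hSdef
  set x : G := (b + b + b) + (p - 3) • g with hxdef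
  set δ : G := b + (p - 1) • g with hδdef
  have hψC₀ : ∀ c ∈ C₀, qmap H c = db := by
    rintro _ ⟨j, hj, rfl⟩
    show qmap H (b + j • g) = db
    rw [map_add, hb, hψjg, add_zero]
  have hψS : ∀ u ∈ S, qmap H u ∈ Sb ∪ {db} := by
    rintro u (hu | hu)
    · exact Or.inl hu
    · exact Or.inr (hψC₀ u hu)
  have hψx : qmap H x = db + db + db := by
    rw [hxdef]
    show qmap H ((b + b + b) + (p-3) • g) = _
    rw [map_add, hψjg, add_zero, map_add, map_add, hb]
  have h2p : (2 * p) • g = 0 := by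
    rw [mul_nsmul', hpg, smul_zero]
  have hxδ : x = δ + δ + δ := by
    have e1 : (p-1) • g + (p-1) • g + (p-1) • g = ((p-1)+((p-1)+(p-1))) • g := by
      rw [add_nsmul, add_nsmul]
      abel
    have e2 : (p-1)+((p-1)+(p-1)) = 2*p + (p-3) := by omega
    have e3 : ((p-1)+((p-1)+(p-1))) • g = (p-3) • g := by
      rw [e2, add_nsmul, h2p, zero_add]
    show (b + b + b) + (p - 3) • g = (b + (p-1) • g) + (b + (p-1) • g) + (b + (p-1) • g)
    rw [← e3, ← e1]
    abel
  -- the key quotient-level fact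
  have pairlem : ∀ α β : G ⧸ H, α ∈ Sb → β ∈ Sb → α + β ≠ db + db := by
    intro α β hα hβ heq
    exact h2db ⟨α, hα, β, hβ, heq⟩
  have singlem : ∀ α : G ⧸ H, α ∈ Sb → α ≠ db := by
    intro α hα heq
    exact hdbS (heq ▸ hα)
  have hquot : ∀ α β γ : G ⧸ H, α ∈ Sb ∪ {db} → β ∈ Sb ∪ {db} → γ ∈ Sb ∪ {db} →
      α + β + γ = db + db + db → α = db ∧ β = db ∧ γ = db := by
    intro α β γ hα hβ hγ hsum
    rcases hα with hα | hα <;> rcases hβ with hβ | hβ <;> rcases hγ with hγ | hγ <;>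
      [skip; rw [Set.mem_singleton_iff] at hγ; rw [Set.mem_singleton_iff] at hβ;
       rw [Set.mem_singleton_iff] at hβ hγ; rw [Set.mem_singleton_iff] at hα;
       rw [Set.mem_singleton_iff] at hα hγ; rw [Set.mem_singleton_iff] at hα hβ;
       rw [Set.mem_singleton_iff] at hα hβ hγ]
    · -- S S S
      exfalso
      apply hxb
      rw [hxdb, ← hsum]
      exact ⟨α + β, ⟨α, hα, β, hβ, rfl⟩, γ, hγ, rfl⟩
    · -- S S d
      exfalso
      rw [hγ] at hsum
      exact pairlem α β hα hβ (add_right_cancel hsum)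
    · -- S d S
      exfalso
      rw [hβ] at hsum
      have h1 : (α + γ) + db = (db + db) + db := by rw [← hsum]; abel
      exact pairlem α γ hα hγ (add_right_cancel h1)
    · -- S d d
      exfalso
      rw [hβ, hγ] at hsum
      have h1 : α + (db + db) = db + (db + db) := by
        rw [← add_assoc, ← add_assoc]
        exact hsum
      exact singlem α hα (add_right_cancel h1)
    · -- d S S
      exfalso
      rw [hα] at hsum
      have h1 : (β + γ) + db = (db + db) + db := by rw [← hsum]; abel
      exact pairlem β γ hβ hγ (add_right_cancel h1)
    · -- d S d
      exfalso
      rw [hα, hγ] at hsum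
      have h1 : β + (db + db) = db + (db + db) := by
        rw [← add_assoc, ← add_assoc, ← hsum]
        abel
      exact singlem β hβ (add_right_cancel h1)
    · -- d d S
      exfalso
      rw [hα, hβ] at hsum
      have h1 : γ + (db + db) = db + (db + db) := by
        rw [← add_assoc, ← add_assoc, ← hsum]
        abel
      exact singlem γ hγ (add_right_cancel h1)
    · exact ⟨hα, hβ, hγ⟩
  -- membership in C₀ from quotient value db
  have hmemC₀ : ∀ u ∈ S, qmap H u = db → ∃ j, j < k' ∧ u = b + j • g := by
    rintro u (hu | hu) hqu
    · exact absurd (hqu ▸ hu) hdbS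
    · obtain ⟨j, hj, rfl⟩ := hu
      exact ⟨j, hj, rfl⟩
  refine ⟨S, x, δ, ?_, ?_, hxδ, ?_, ?_, ?_, ?_⟩
  · -- cardinality
    have hdisj : Disjoint F C₀ := by
      rw [Set.disjoint_right]
      intro c hc hcF
      have h1 : qmap H c = db := hψC₀ c hc
      exact hdbS (h1 ▸ hcF)
    have hFcard : F.ncard = Sb.ncard * p := by
      rw [hFdef, preimage_ncard, hHcard]
    have hC₀card : C₀.ncard = k' := by
      rw [hC₀def]
      rw [Set.ncard_image_of_injOn]
      · rw [← Finset.coe_range, Set.ncard_coe_finset, Finset.card_range]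
      · intro i hi j hj hij
        exact hcoord i j (by simp at hi; omega) (by simp at hj; omega)
          (by simpa using hij)
    rw [hSdef, Set.ncard_union_eq hdisj (Set.toFinite _) (Set.toFinite _), hFcard, hC₀card]
    have h3Sb : 3 * Sb.ncard = q - 1 := by rw [hSbcard]; omega
    have e : 3 * (Sb.ncard * p + k') = (3 * Sb.ncard) * p + 3 * k' := by ring
    rw [h3Sb, h3k'] at e
    have e2 : (q - 1) * p = q * p - p := by rw [Nat.sub_mul, one_mul]
    have e3 : p ≤ q * p := Nat.le_mul_of_pos_left p hq0
    omega
  · -- x ∉ S + S + S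
    rintro ⟨w, ⟨u1, h1, u2, h2, rfl⟩, u3, h3, heq⟩
    have heq' : u1 + u2 + u3 = x := heq
    have hq123 : qmap H u1 + qmap H u2 + qmap H u3 = db + db + db := by
      rw [← map_add, ← map_add, heq', hψx]
    obtain ⟨e1, e2, e3⟩ := hquot _ _ _ (hψS u1 h1) (hψS u2 h2) (hψS u3 h3) hq123
    obtain ⟨j1, hj1, rfl⟩ := hmemC₀ u1 h1 e1
    obtain ⟨j2, hj2, rfl⟩ := hmemC₀ u2 h2 e2
    obtain ⟨j3, hj3, rfl⟩ := hmemC₀ u3 h3 e3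
    have hsum : (j1 + j2 + j3) • g = (p - 3) • g := by
      have lhs : (b + j1 • g) + (b + j2 • g) + (b + j3 • g)
          = (b + b + b) + (j1 + j2 + j3) • g := by
        rw [add_nsmul, add_nsmul]
        abel
      have := heq'
      rw [lhs, hxdef] at this
      exact add_left_cancel this
    have : j1 + j2 + j3 = p - 3 := hcoord _ _ (by omega) (by omega) hsum
    omega
  · -- δ ∉ S
    rintro (hδF | hδC)
    · apply hdbS
      have : qmap H δ = db := by
        rw [hδdef]
        show qmap H (b + (p-1) • g) = db
        rw [map_add, hb, hψjg, add_zero]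
      exact this ▸ hδF
    · obtain ⟨j, hj, hjeq⟩ := hδC
      have : b + j • g = b + (p - 1) • g := hjeq
      have := hcoord j (p - 1) (by simp at hj; omega) (by omega) (add_left_cancel this)
      simp at hj
      omega
  · -- δ + δ ∉ S + S
    rintro ⟨u1, h1, u2, h2, heq⟩
    have heq' : u1 + u2 = δ + δ := heq
    have hq12 : qmap H u1 + qmap H u2 = db + db := by
      rw [← map_add, heq', hδdef]
      show qmap H ((b + (p-1) • g) + (b + (p-1) • g)) = db + db
      rw [map_add, map_add, hb, hψjg, add_zero]
    have he1 : qmap H u1 = db ∧ qmap H u2 = db := by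
      rcases hψS u1 h1 with ha | ha
      · rcases hψS u2 h2 with hb' | hb'
        · exact absurd ⟨_, ha, _, hb', hq12⟩ h2db
        · rw [Set.mem_singleton_iff] at hb'
          exfalso
          apply hdbS
          have : qmap H u1 = db := by
            rw [hb'] at hq12
            exact add_right_cancel hq12
          exact this ▸ ha
      · rw [Set.mem_singleton_iff] at ha
        rcases hψS u2 h2 with hb' | hb'
        · exfalso
          apply hdbS
          have : qmap H u2 = db := by
            rw [ha] at hq12
            have h1' : db + qmap H u2 = db + db := hq12
            exact add_left_cancel h1'
          exact this ▸ hb'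
        · rw [Set.mem_singleton_iff] at hb'
          exact ⟨ha, hb'⟩
    obtain ⟨j1, hj1, rfl⟩ := hmemC₀ u1 h1 he1.1
    obtain ⟨j2, hj2, rfl⟩ := hmemC₀ u2 h2 he1.2
    have hsum : (j1 + j2) • g = ((p-1) + (p-1)) • g := by
      have lhs : (b + j1 • g) + (b + j2 • g) = (b + b) + (j1 + j2) • g := by
        rw [add_nsmul]; abel
      have rhs : δ + δ = (b + b) + ((p-1) + (p-1)) • g := by
        rw [hδdef, add_nsmul]
        show (b + (p-1) • g) + (b + (p-1) • g) = _
        abel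
      have := heq'
      rw [lhs, rhs] at this
      exact add_left_cancel this
    have hmod : ((p-1) + (p-1)) • g = (p - 2) • g := by
      have e2 : (p-1) + (p-1) = p + (p - 2) := by omega
      rw [e2, add_nsmul, hpg, zero_add]
    rw [hmod] at hsum
    have : j1 + j2 = p - 2 := hcoord _ _ (by omega) (by omega) hsum
    omega
  · -- spanning
    by_cases hq1 : q = 1
    · have hb' : b = 0 := hb0 hq1
      have hgS : g ∈ S := by
        right
        refine ⟨1, by simp only [Set.mem_Iio]; omega, ?_⟩
        show b + (1 : ℕ) • g = g
        rw [hb', one_nsmul, zero_add]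
      have hHtop : H = ⊤ := by
        apply AddSubgroup.eq_top_of_card_eq
        rw [hHcard, hcard, hnq, hq1, one_mul]
      have : AddSubgroup.zmultiples g ≤ AddSubgroup.closure S := by
        rw [AddSubgroup.zmultiples_eq_closure]
        exact AddSubgroup.closure_le _ |>.2 (by
          intro y hy
          rw [Set.mem_singleton_iff.1 hy]
          exact AddSubgroup.subset_closure hgS)
      rw [← hHdef, hHtop] at this
      exact top_le_iff.1 this
    · have h0Sb : (0 : G ⧸ H) ∈ Sb := h01b.resolve_left hq1
      have hHsub : (H : Set G) ⊆ S := by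
        intro h hh
        left
        show qmap H h ∈ Sb
        rw [qmap_zero_iff.2 hh]
        exact h0Sb
      have hHle : H ≤ AddSubgroup.closure S :=
        fun h hh => AddSubgroup.subset_closure (hHsub hh)
      have hmap : AddSubgroup.map (qmap H) (AddSubgroup.closure S) = ⊤ := by
        rw [AddMonoidHom.map_closure]
        apply top_le_iff.1
        rw [← hspanb]
        apply AddSubgroup.closure_mono
        intro s hs
        obtain ⟨u, hu, rfl⟩ : ∃ u ∈ F, qmap H u = s := by
          obtain ⟨u, hu⟩ := QuotientAddGroup.mk'_surjective H s
          exact ⟨u, by rw [hFdef]; show qmap H u ∈ Sb; rw [hu]; exact hs, hu⟩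
        exact ⟨u, Or.inl hu, rfl⟩
      have hcomap := AddSubgroup.comap_map_eq (qmap H) (AddSubgroup.closure S)
      rw [hmap] at hcomap
      rw [QuotientAddGroup.ker_mk'] at hcomap
      have : (⊤ : AddSubgroup G) = AddSubgroup.closure S ⊔ H := by
        rw [← hcomap]; rfl
      rw [sup_eq_left.2 hHle] at this
      exact this.symm
  · -- 0 ∈ S
    right
    by_cases hq1 : q = 1
    · right
      refine ⟨0, ?_, ?_⟩
      · simp only [Set.mem_Iio]; omega
      · show b + (0 : ℕ) • g = 0
        rw [hb0 hq1, zero_nsmul, add_zero]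
    · left
      show qmap H 0 ∈ Sb
      rw [map_zero]
      exact h01b.resolve_left hq1

end Build
section Final
variable {G : Type u} [AddCommGroup G] [Finite G]

lemma singleton_zero_add (X : Set G) : ({0} : Set G) + X = X := by
  ext y
  simp [Set.mem_add]

lemma iterSum_three (X : Set G) : iterSum X 3 = X + X + X := by
  show ((iterSum X 0 + X) + X) + X = X + X + X
  show ((({0} : Set G) + X) + X) + X = X + X + X
  rw [singleton_zero_add]

/-- The upper bound: any `A` whose 3-fold sumset of `insert 0 A` is not everything
has at most `(n-1)/3` elements. -/
lemma upper_bound (h3 : ∀ d : ℕ, d ∣ Nat.card G → d % 3 = 1) (A : Set G)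
    (hA : iterSum (insert 0 A) 3 ≠ Set.univ) : A.ncard ≤ (Nat.card G - 1) / 3 := by
  set S : Set G := insert 0 A with hS
  have hSne : S.Nonempty := ⟨0, Set.mem_insert 0 A⟩
  obtain ⟨x, hx⟩ := Set.ne_univ_iff_exists_notMem _ |>.1 (by rwa [iterSum_three] at hA)
  have := phi (Nat.card G) G rfl h3 S hSne x hx
  have hAS : A.ncard ≤ S.ncard := Set.ncard_le_ncard (Set.subset_insert 0 A) (Set.toFinite S)
  omega

lemma aperiodic_of_card (hdiv : ∀ d : ℕ, d ∣ Nat.card G → d % 3 = 1)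
    (A : Set G) (hcard : 3 * A.ncard = Nat.card G - 1) (hn2 : 2 ≤ Nat.card G) :
    Aperiodic A := by
  classical
  intro τ hτ
  have himg : (· + τ) '' A = A := by
    rw [← Set.add_singleton]; exact hτ
  -- sum over A is invariant under translation
  set Af := (Set.toFinite A).toFinset with hAf
  have hAfA : ∀ y : G, y ∈ Af ↔ y ∈ A := fun y => Set.Finite.mem_toFinset _
  have hAfimg : Af.image (· + τ) = Af := by
    ext a
    simp only [Finset.mem_image]
    constructor
    · rintro ⟨b, hb, rfl⟩
      have hmem : b + τ ∈ (fun x => x + τ) '' A := ⟨b, (hAfA b).1 hb, rfl⟩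
      rw [himg] at hmem
      exact (hAfA _).2 hmem
    · intro ha
      have hmem : a ∈ (fun x => x + τ) '' A := by rw [himg]; exact (hAfA a).1 ha
      obtain ⟨b, hb, hba⟩ := hmem
      exact ⟨b, (hAfA b).2 hb, hba⟩
  have hsum : ∑ a ∈ Af, (a + τ) = ∑ a ∈ Af, a := by
    conv_rhs => rw [← hAfimg]
    rw [Finset.sum_image (fun a _ b _ h => by simpa using h)]
  rw [Finset.sum_add_distrib, Finset.sum_const] at hsum
  have hzero : Af.card • τ = 0 := by
    have h2 : (∑ a ∈ Af, a) + Af.card • τ = (∑ a ∈ Af, a) + 0 := by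
      rw [add_zero]; exact hsum
    exact add_left_cancel h2
  have hcardA : Af.card = A.ncard := (Set.ncard_eq_toFinset_card _ _).symm
  rw [hcardA] at hzero
  have hd1 : addOrderOf τ ∣ A.ncard := addOrderOf_dvd_of_nsmul_eq_zero hzero
  have hd2 : addOrderOf τ ∣ Nat.card G - 1 := hd1.trans ⟨3, by omega⟩
  have hd3 : addOrderOf τ ∣ Nat.card G := addOrderOf_dvd_natCard τ
  have hd4 : addOrderOf τ ∣ 1 := by
    have := Nat.dvd_sub hd3 hd2
    rwa [Nat.sub_sub_self (by omega)] at this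
  have : addOrderOf τ = 1 := Nat.eq_one_of_dvd_one hd4
  exact AddMonoid.addOrderOf_eq_one_iff.1 this

end Final

theorem stmt16 (G : Type*) [AddCommGroup G] [Finite G] (h : 4 ≤ diamAbs G)
    (h3 : ∀ d : ℕ, d ∣ Nat.card G → d % 3 = 1) :
    sSup {k : ℕ | ∃ A : Set G, Aperiodic A ∧ RhoMax 4 A ∧ Spans A ∧ A.ncard = k}
      = (Nat.card G - 1) / 3 := by
  classical
  set n := Nat.card G with hn
  have hn3 : n % 3 = 1 := h3 n dvd_rfl
  have hn1 : 1 ≤ n := hn ▸ Nat.card_pos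
  -- n ≥ 2, else diamAbs G = 0 < 4
  have hn2 : 2 ≤ n := by
    by_contra hlt
    push_neg at hlt
    have hone : n = 1 := by omega
    haveI : Subsingleton G := Nat.card_eq_one_iff_unique.mp (hn.symm.trans hone) |>.1
    have hD : ∀ d ∈ {d : ℕ | ∃ A : Set G, Spans A ∧ diamPlus A = d}, d ≤ 0 := by
      rintro d ⟨A, -, hdA⟩
      have h0 : iterSum (insert 0 A) 0 = Set.univ := by
        apply Set.eq_univ_of_forall
        intro y
        show y ∈ ({0} : Set G)
        rw [Subsingleton.elim y 0]
        rfl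
      have : diamPlus A = 0 := Nat.sInf_eq_zero.2 (Or.inl h0)
      omega
    have : diamAbs G ≤ 0 := by
      by_cases hD0 : {d : ℕ | ∃ A : Set G, Spans A ∧ diamPlus A = d}.Nonempty
      · exact csSup_le hD0 hD
      · rw [Set.not_nonempty_iff_eq_empty] at hD0
        rw [diamAbs, hD0]
        simp
    omega
  -- the extremal set
  obtain ⟨S0, x, δ, hScard, hxS, hxδ, hδS, h2δ, hspan, h01⟩ := build n G hn.symm h3
  have h0S : (0 : G) ∈ S0 := h01.resolve_left (by omega)
  have hins : insert (0 : G) S0 = S0 := Set.insert_eq_self.2 h0S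
  have h3card : 3 * S0.ncard = n - 1 := by rw [hScard]; omega
  have hmem : (n - 1) / 3 ∈ {k : ℕ | ∃ A : Set G, Aperiodic A ∧ RhoMax 4 A ∧ Spans A ∧
      A.ncard = k} := by
    refine ⟨S0, aperiodic_of_card h3 S0 h3card hn2, ⟨?_, ?_⟩, hspan, hScard⟩
    · -- iterSum (insert 0 S0) 3 ≠ univ
      show iterSum (insert 0 S0) (4 - 1) ≠ Set.univ
      rw [hins, iterSum_three]
      intro hu
      exact hxS (hu ▸ Set.mem_univ x)
    · intro B hSB hB
      have hBle : B.ncard ≤ (n - 1) / 3 := by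
        have := upper_bound h3 B (by rwa [show (4:ℕ) - 1 = 3 from rfl] at hB)
        omega
      exact (Set.eq_of_subset_of_ncard_le hSB (by rw [hScard]; exact hBle)
        (Set.toFinite B)).symm
  have hub : ∀ k ∈ {k : ℕ | ∃ A : Set G, Aperiodic A ∧ RhoMax 4 A ∧ Spans A ∧ A.ncard = k},
      k ≤ (n - 1) / 3 := by
    rintro k ⟨A, -, ⟨hA3, -⟩, -, rfl⟩
    exact upper_bound h3 A (by rwa [show (4:ℕ) - 1 = 3 from rfl] at hA3)
  exact le_antisymm (csSup_le ⟨_, hmem⟩ hub) (le_csSup ⟨(n - 1) / 3, hub⟩ hmem)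
end

section
/- Let G be a finite abelian group and ρ ≥ 4. If A generates G and the (ρ-1)-fold sumset of A ∪ {0} is not all of G (i.e. diam_A^+(G) ≥ ρ), then |A| ≤ (2/(ρ+1))|G|. Moreover, |A| = (2/(ρ+1))|G| holds if and only if A = H ∪ (g + H) for some subgroup H ≤ G with G/H cyclic of order ρ+1 and g + H a generator of G/H. -/
open Pointwise

variable {G : Type*}

set_option linter.unusedSectionVars false
section KL

variable [AddCommGroup G] [Finite G]

namespace KL

/-- admissible sets for T -/
def adm (T Y : Set G) : Prop := Y.Nonempty ∧ Y + T ≠ Set.univ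

/-- isoperimetric connectivity -/
noncomputable def kap (T : Set G) : ℕ :=
  sInf ((fun Y : Set G => (Y + T).ncard - Y.ncard) '' {Y | adm T Y})

variable {T : Set G}

lemma subset_addT (h0 : (0:G) ∈ T) (Y : Set G) : Y ⊆ Y + T :=
  fun y hy => Set.mem_add.2 ⟨y, hy, 0, h0, add_zero y⟩

lemma singleton_zero_add (T : Set G) : ({(0:G)} : Set G) + T = T := by
  rw [Set.singleton_add]
  simp

lemma adm_singleton (hTne : T ≠ Set.univ) : adm T {(0:G)} :=
  ⟨Set.singleton_nonempty 0, by rwa [singleton_zero_add]⟩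

lemma kap_le (h0 : (0:G) ∈ T) {Y : Set G} (hY : adm T Y) :
    Y.ncard + kap T ≤ (Y + T).ncard := by
  have h1 : kap T ≤ (Y + T).ncard - Y.ncard := Nat.sInf_le ⟨Y, hY, rfl⟩
  have h2 : Y.ncard ≤ (Y + T).ncard := Set.ncard_le_ncard (subset_addT h0 Y) (Set.toFinite _)
  omega

/-- fragments -/
def frag (T F : Set G) : Prop := adm T F ∧ (F + T).ncard = F.ncard + kap T

lemma frag_exists (h0 : (0:G) ∈ T) (hTne : T ≠ Set.univ) : ∃ F : Set G, frag T F := by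
  have hne : ((fun Y : Set G => (Y + T).ncard - Y.ncard) '' {Y | adm T Y}).Nonempty :=
    ⟨_, ⟨{0}, adm_singleton hTne, rfl⟩⟩
  obtain ⟨F, hF, hFk⟩ := Nat.sInf_mem hne
  have h2 : F.ncard ≤ (F + T).ncard := Set.ncard_le_ncard (subset_addT h0 F) (Set.toFinite _)
  have hk : (F + T).ncard - F.ncard = kap T := hFk
  exact ⟨F, hF, by omega⟩


noncomputable def atomSize (T : Set G) : ℕ := sInf (Set.ncard '' {F : Set G | frag T F})

def atom (T Y : Set G) : Prop := frag T Y ∧ Y.ncard = atomSize T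

lemma atom_exists (h0 : (0:G) ∈ T) (hTne : T ≠ Set.univ) : ∃ Y : Set G, atom T Y := by
  obtain ⟨F, hF⟩ := frag_exists h0 hTne
  obtain ⟨Y, hY, hYk⟩ := Nat.sInf_mem (⟨_, ⟨F, hF, rfl⟩⟩ :
    (Set.ncard '' {F : Set G | frag T F}).Nonempty)
  exact ⟨Y, hY, hYk⟩

lemma atomSize_le {F : Set G} (hF : frag T F) : atomSize T ≤ F.ncard :=
  Nat.sInf_le ⟨F, hF, rfl⟩

lemma add_singleton_ncard (Y : Set G) (c : G) : (Y + {c}).ncard = Y.ncard := by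
  rw [Set.add_singleton]
  exact Set.ncard_image_of_injective _ (add_left_injective c)

lemma add_singleton_univ {Y : Set G} {c : G} (h : Y + {c} = Set.univ) : Y = Set.univ := by
  ext x
  simp only [Set.mem_univ, iff_true]
  have hx : x + c ∈ Y + {c} := h ▸ Set.mem_univ _
  obtain ⟨y, hy, z, hz, hyz⟩ := Set.mem_add.1 hx
  rw [Set.mem_singleton_iff] at hz
  rw [hz] at hyz
  rwa [add_left_injective c hyz] at hy

lemma frag_translate {F : Set G} (hF : frag T F) (c : G) : frag T (F + {c}) := by
  have hassoc : F + {c} + T = F + T + {c} := add_right_comm F {c} T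
  refine ⟨⟨hF.1.1.add (Set.singleton_nonempty c), ?_⟩, ?_⟩
  · rw [hassoc]
    intro h
    exact hF.1.2 (add_singleton_univ h)
  · rw [hassoc, add_singleton_ncard, add_singleton_ncard]
    exact hF.2

lemma neg_ncard (S : Set G) : (-S).ncard = S.ncard := by
  have h : -S = (fun x : G => -x) '' S := by
    ext x
    constructor
    · intro hx
      exact ⟨-x, Set.mem_neg.1 hx, neg_neg x⟩
    · rintro ⟨y, hy, rfl⟩
      exact Set.mem_neg.2 (by simpa using hy)
  rw [h]
  exact Set.ncard_image_of_injective _ neg_injective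

lemma frag_dual (h0 : (0:G) ∈ T) {F : Set G} (hF : frag T F) :
    frag T (-(F + T)ᶜ) ∧ (-(F + T)ᶜ).ncard + (F + T).ncard = Nat.card G := by
  set F' : Set G := -(F + T)ᶜ with hF'
  have hcne : ((F + T)ᶜ).Nonempty := Set.nonempty_compl.2 hF.1.2
  have hF'ne : F'.Nonempty := by
    obtain ⟨u, hu⟩ := hcne
    exact ⟨-u, Set.mem_neg.2 (by simpa using hu)⟩
  have hsub1 : F' + T ⊆ -(Fᶜ) := by
    rintro x hx
    obtain ⟨y, hy, t, ht, rfl⟩ := Set.mem_add.1 hx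
    have hy' : -y ∈ (F + T)ᶜ := Set.mem_neg.1 hy
    refine Set.mem_neg.2 ?_
    intro hxf
    exact hy' (by
      have : -(y + t) + t ∈ F + T := Set.mem_add.2 ⟨-(y+t), hxf, t, ht, rfl⟩
      simpa using this)
  have hF'Tne : F' + T ≠ Set.univ := by
    obtain ⟨f, hf⟩ := hF.1.1
    intro h
    have : -f ∈ F' + T := h ▸ Set.mem_univ _
    obtain ⟨y, hy, t, ht, hyt⟩ := Set.mem_add.1 this
    have hy' : -y ∈ (F + T)ᶜ := Set.mem_neg.1 hy
    apply hy'
    have hyy : -y = f + t := by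
      have hyv : y = -f - t := by rw [← hyt]; abel
      rw [hyv]; abel
    rw [hyy]
    exact Set.mem_add.2 ⟨f, hf, t, ht, rfl⟩
  have n1 : F'.ncard + (F + T).ncard = Nat.card G := by
    have := Set.ncard_add_ncard_compl (F + T) (Set.toFinite _) (Set.toFinite _)
    rw [hF', neg_ncard]
    omega
  have n2 : (F' + T).ncard + F.ncard ≤ Nat.card G := by
    have h1 : (F' + T).ncard ≤ (-(Fᶜ)).ncard := Set.ncard_le_ncard hsub1 (Set.toFinite _)
    have h2 := Set.ncard_add_ncard_compl F (Set.toFinite _) (Set.toFinite _)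
    rw [neg_ncard] at h1
    omega
  have n3 : F'.ncard + kap T ≤ (F' + T).ncard := kap_le h0 ⟨hF'ne, hF'Tne⟩
  have n4 : (F + T).ncard = F.ncard + kap T := hF.2
  exact ⟨⟨⟨hF'ne, hF'Tne⟩, by omega⟩, n1⟩

lemma frag_card_bound (h0 : (0:G) ∈ T) {F : Set G} (hF : frag T F) :
    atomSize T + F.ncard + kap T ≤ Nat.card G := by
  obtain ⟨hfrag', hcard⟩ := frag_dual h0 hF
  have h1 := atomSize_le hfrag'
  have n4 : (F + T).ncard = F.ncard + kap T := hF.2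
  omega


lemma atoms_eq (h0 : (0:G) ∈ T) {Y Z : Set G} (hY : atom T Y) (hZ : atom T Z)
    (hx : (Y ∩ Z).Nonempty) : Y = Z := by
  have hICsub : (Y ∩ Z) + T ⊆ (Y + T) ∩ (Z + T) :=
    Set.subset_inter (Set.add_subset_add_right Set.inter_subset_left)
      (Set.add_subset_add_right Set.inter_subset_right)
  have hunion : (Y ∪ Z) + T = (Y + T) ∪ (Z + T) := Set.union_add
  have hIC_ne : (Y ∩ Z) + T ≠ Set.univ := by
    intro h
    apply hY.1.1.2
    apply Set.eq_univ_of_univ_subset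
    calc Set.univ = (Y ∩ Z) + T := h.symm
    _ ⊆ (Y + T) ∩ (Z + T) := hICsub
    _ ⊆ Y + T := Set.inter_subset_left
  have hIC_adm : adm T (Y ∩ Z) := ⟨hx, hIC_ne⟩
  have kIC : (Y ∩ Z).ncard + kap T ≤ ((Y ∩ Z) + T).ncard := kap_le h0 hIC_adm
  have hsub_card : ((Y ∩ Z) + T).ncard ≤ ((Y + T) ∩ (Z + T)).ncard :=
    Set.ncard_le_ncard hICsub (Set.toFinite _)
  have cardunion : ((Y + T) ∩ (Z + T)).ncard + ((Y + T) ∪ (Z + T)).ncard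
      = (Y + T).ncard + (Z + T).ncard :=
    Set.ncard_inter_add_ncard_union _ _ (Set.toFinite _) (Set.toFinite _)
  have interunion : (Y ∩ Z).ncard + (Y ∪ Z).ncard = Y.ncard + Z.ncard :=
    Set.ncard_inter_add_ncard_union _ _ (Set.toFinite _) (Set.toFinite _)
  have hYT : (Y + T).ncard = Y.ncard + kap T := hY.1.2
  have hZT : (Z + T).ncard = Z.ncard + kap T := hZ.1.2
  have hYc : Y.ncard = atomSize T := hY.2
  have hZc : Z.ncard = atomSize T := hZ.2
  by_cases hu : (Y ∪ Z) + T = Set.univ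
  · exfalso
    have hNcard : ((Y ∪ Z) + T).ncard = Nat.card G := by rw [hu, Set.ncard_univ]
    have hbound := frag_card_bound h0 hY.1
    have hxpos : 0 < (Y ∩ Z).ncard := (Set.ncard_pos (Set.toFinite _)).2 hx
    have humem : ((Y + T) ∪ (Z + T)).ncard = Nat.card G := by rw [← hunion]; exact hNcard
    omega
  · have hU_adm : adm T (Y ∪ Z) := ⟨hY.1.1.1.mono Set.subset_union_left, hu⟩
    have kU : (Y ∪ Z).ncard + kap T ≤ ((Y ∪ Z) + T).ncard := kap_le h0 hU_adm
    have hUcard : ((Y ∪ Z) + T).ncard = ((Y + T) ∪ (Z + T)).ncard := by rw [hunion]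
    -- squeeze to equality for the intersection
    have hfragIC : frag T (Y ∩ Z) := ⟨hIC_adm, by omega⟩
    have h1 := atomSize_le hfragIC
    have hIY : Y ∩ Z = Y :=
      Set.eq_of_subset_of_ncard_le (Set.inter_subset_left : Y ∩ Z ⊆ Y) (by omega) (Set.toFinite _)
    have hIZ : Y ∩ Z = Z :=
      Set.eq_of_subset_of_ncard_le (Set.inter_subset_right : Y ∩ Z ⊆ Z) (by omega) (Set.toFinite _)
    rw [← hIY, hIZ]

lemma exists_atom_subgroup (h0 : (0:G) ∈ T) (hTne : T ≠ Set.univ) :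
    ∃ H : AddSubgroup G, frag T (H : Set G) ∧ (H : Set G).ncard = atomSize T := by
  obtain ⟨Z, hZ⟩ := atom_exists h0 hTne
  obtain ⟨z, hz⟩ := hZ.1.1.1
  set Y : Set G := Z + {-z} with hYdef
  have hYatom : atom T Y := ⟨frag_translate hZ.1 (-z), by rw [hYdef, add_singleton_ncard]; exact hZ.2⟩
  have h0Y : (0:G) ∈ Y := Set.mem_add.2 ⟨z, hz, -z, rfl, add_neg_cancel z⟩
  have key : ∀ c ∈ Y, Y + {c} = Y := by
    intro c hc
    have hatom' : atom T (Y + {c}) :=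
      ⟨frag_translate hYatom.1 c, by rw [add_singleton_ncard]; exact hYatom.2⟩
    refine atoms_eq h0 hatom' hYatom ⟨c, ?_, hc⟩
    exact Set.mem_add.2 ⟨0, h0Y, c, rfl, zero_add c⟩
  have hneg : ∀ a ∈ Y, -a ∈ Y := by
    intro a ha
    have h0mem : (0:G) ∈ Y + {a} := (key a ha).symm ▸ h0Y
    obtain ⟨y, hy, w, hw, hyw⟩ := Set.mem_add.1 h0mem
    rw [Set.mem_singleton_iff] at hw
    rw [hw] at hyw
    rwa [eq_neg_of_add_eq_zero_left hyw] at hy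
  have hadd : ∀ a ∈ Y, ∀ b ∈ Y, a + b ∈ Y := by
    intro a ha b hb
    have : a + b ∈ Y + {b} := Set.mem_add.2 ⟨a, ha, b, rfl, rfl⟩
    rwa [key b hb] at this
  refine ⟨{ carrier := Y, add_mem' := fun {a b} ha hb => hadd a ha b hb,
            zero_mem' := h0Y, neg_mem' := fun {a} ha => hneg a ha }, hYatom.1, hYatom.2⟩

lemma two_kap (h0 : (0:G) ∈ T) (hspan : AddSubgroup.closure T = ⊤) (hTne : T ≠ Set.univ) :
    T.ncard ≤ 2 * kap T ∧
      (T.ncard = 2 * kap T →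
        ∃ (H : AddSubgroup G) (g : G), g ∉ H ∧ T = (H : Set G) ∪ ({g} + (H : Set G)) ∧
          T.ncard = 2 * (H : Set G).ncard) := by
  obtain ⟨H, hHfrag, _⟩ := exists_atom_subgroup h0 hTne
  -- an element of T outside H
  have hTH : ∃ t ∈ T, t ∉ H := by
    by_contra h
    push_neg at h
    have hle : AddSubgroup.closure T ≤ H := (AddSubgroup.closure_le H).2 h
    rw [hspan, top_le_iff] at hle
    apply hHfrag.1.2
    apply Set.eq_univ_of_univ_subset
    have : (H : Set G) = Set.univ := by rw [hle]; rfl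
    calc Set.univ = (H : Set G) := this.symm
    _ ⊆ (H : Set G) + T := subset_addT h0 _
  obtain ⟨t, htT, htH⟩ := hTH
  have hsubH : (H : Set G) ⊆ (H : Set G) + T := subset_addT h0 _
  have hsubC : {t} + (H : Set G) ⊆ (H : Set G) + T := by
    rintro x hx
    obtain ⟨a, ha, b, hb, rfl⟩ := Set.mem_add.1 hx
    rw [Set.mem_singleton_iff] at ha
    exact Set.mem_add.2 ⟨b, hb, a, ha ▸ htT, add_comm b a⟩
  have hdisj : Disjoint (H : Set G) ({t} + (H : Set G)) := by
    rw [Set.disjoint_left]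
    rintro x hxH hxC
    obtain ⟨a, ha, b, hb, rfl⟩ := Set.mem_add.1 hxC
    rw [Set.mem_singleton_iff] at ha
    subst ha
    exact htH (by simpa using AddSubgroup.sub_mem H hxH hb)
  have hcg : ({t} + (H : Set G)).ncard = (H : Set G).ncard := by
    rw [Set.singleton_add]
    exact Set.ncard_image_of_injective _ (add_right_injective t)
  have hunion_card : ((H : Set G) ∪ ({t} + (H : Set G))).ncard = 2 * (H : Set G).ncard := by
    rw [Set.ncard_union_eq hdisj (Set.toFinite _) (Set.toFinite _), hcg]
    ring
  have hunion_sub : (H : Set G) ∪ ({t} + (H : Set G)) ⊆ (H : Set G) + T :=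
    Set.union_subset hsubH hsubC
  have h2H : 2 * (H : Set G).ncard ≤ ((H : Set G) + T).ncard := by
    rw [← hunion_card]
    exact Set.ncard_le_ncard hunion_sub (Set.toFinite _)
  have hTsub : T ⊆ (H : Set G) + T := fun x hx =>
    Set.mem_add.2 ⟨0, H.zero_mem, x, hx, zero_add x⟩
  have hTle : T.ncard ≤ ((H : Set G) + T).ncard := Set.ncard_le_ncard hTsub (Set.toFinite _)
  have hHT : ((H : Set G) + T).ncard = (H : Set G).ncard + kap T := hHfrag.2
  refine ⟨by omega, ?_⟩
  intro heq
  refine ⟨H, t, htH, ?_, by omega⟩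
  have hTeq : T = (H : Set G) + T :=
    Set.eq_of_subset_of_ncard_le hTsub (by omega) (Set.toFinite _)
  have : (H : Set G) ∪ ({t} + (H : Set G)) = (H : Set G) + T :=
    Set.eq_of_subset_of_ncard_le hunion_sub (by omega) (Set.toFinite _)
  rw [hTeq, ← this]

lemma iterSum_one (T : Set G) : iterSum T 1 = T := by
  show ({0} : Set G) + T = T
  exact singleton_zero_add T

lemma zero_mem_iterSum (h0 : (0:G) ∈ T) : ∀ n, (0:G) ∈ iterSum T n
  | 0 => rfl
  | (n+1) => Set.mem_add.2 ⟨0, zero_mem_iterSum h0 n, 0, h0, add_zero 0⟩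

lemma iterSum_subset_succ (h0 : (0:G) ∈ T) (n : ℕ) : iterSum T n ⊆ iterSum T (n+1) :=
  subset_addT h0 _

lemma iterSum_mono (h0 : (0:G) ∈ T) {m n : ℕ} (h : m ≤ n) : iterSum T m ⊆ iterSum T n := by
  induction n with
  | zero => rw [Nat.le_zero.1 h]
  | succ n ih =>
    rcases Nat.lt_or_ge m (n+1) with h' | h'
    · exact (ih (by omega)).trans (iterSum_subset_succ h0 n)
    · rw [show m = n + 1 by omega]

lemma iterSum_grow (h0 : (0:G) ∈ T) {k : ℕ} (hne : iterSum T k ≠ Set.univ) :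
    ∀ i, i + 2 ≤ k + 1 → T.ncard + i * kap T ≤ (iterSum T (i+1)).ncard := by
  intro i
  induction i with
  | zero => intro _; rw [iterSum_one]; omega
  | succ i ih =>
    intro hik
    have hprev := ih (by omega)
    have hadm : adm T (iterSum T (i+1)) := by
      refine ⟨⟨0, zero_mem_iterSum h0 _⟩, ?_⟩
      intro h
      apply hne
      apply Set.eq_univ_of_univ_subset
      calc Set.univ = iterSum T (i+1) + T := h.symm
      _ = iterSum T (i+2) := rfl
      _ ⊆ iterSum T k := iterSum_mono h0 (by omega)
    have hstep : (iterSum T (i+1)).ncard + kap T ≤ (iterSum T (i+1) + T).ncard :=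
      kap_le h0 hadm
    have : iterSum T (i+1) + T = iterSum T (i+2) := rfl
    rw [this] at hstep
    calc T.ncard + (i+1) * kap T = (T.ncard + i * kap T) + kap T := by ring
    _ ≤ (iterSum T (i+1)).ncard + kap T := by omega
    _ ≤ (iterSum T (i+1+1)).ncard := hstep

lemma main_bound (r : ℕ) (T : Set G) (h0 : (0:G) ∈ T)
    (hspan : AddSubgroup.closure T = ⊤) (hne : iterSum T (3+r) ≠ Set.univ) :
    (5+r) * T.ncard ≤ 2 * Nat.card G ∧
      ((5+r) * T.ncard = 2 * Nat.card G →
        ∃ (H : AddSubgroup G) (g : G), g ∉ H ∧ T = (H : Set G) ∪ ({g} + (H : Set G)) ∧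
          T.ncard = 2 * (H : Set G).ncard) := by
  have hTne : T ≠ Set.univ := by
    intro h
    apply hne
    apply Set.eq_univ_of_univ_subset
    calc Set.univ = T := h.symm
    _ = iterSum T 1 := (iterSum_one T).symm
    _ ⊆ iterSum T (3+r) := iterSum_mono h0 (by omega)
  -- chain growth up to step 2+r
  have hgrow := iterSum_grow h0 hne (1+r) (by omega)
  have hpre : iterSum T (1+r+1) = iterSum T (2+r) := by rw [show 1+r+1 = 2+r by omega]
  rw [hpre] at hgrow
  -- complement bound
  obtain ⟨w, hw⟩ := Set.ne_univ_iff_exists_notMem _ |>.1 hne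
  have himg : (fun t => w - t) '' T ⊆ (iterSum T (2+r))ᶜ := by
    rintro x ⟨t, ht, rfl⟩
    intro hmem
    apply hw
    have : (w - t) + t ∈ iterSum T (2+r) + T := Set.mem_add.2 ⟨w - t, hmem, t, ht, rfl⟩
    have h23 : iterSum T (2+r) + T = iterSum T (3+r) := by
      rw [show (3+r) = (2+r)+1 by omega]; rfl
    rw [h23] at this
    simpa using this
  have hcompl : T.ncard + (iterSum T (2+r)).ncard ≤ Nat.card G := by
    have h1 : ((fun t => w - t) '' T).ncard = T.ncard :=
      Set.ncard_image_of_injective _ sub_right_injective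
    have h2 : ((fun t => w - t) '' T).ncard ≤ ((iterSum T (2+r))ᶜ).ncard :=
      Set.ncard_le_ncard himg (Set.toFinite _)
    have h3 := Set.ncard_add_ncard_compl (iterSum T (2+r)) (Set.toFinite _) (Set.toFinite _)
    omega
  obtain ⟨h2k, h2keq⟩ := two_kap h0 hspan hTne
  -- arithmetic
  have hmul : (1+r) * T.ncard ≤ (1+r) * (2 * kap T) := Nat.mul_le_mul_left _ h2k
  have hexp : (5+r) * T.ncard = 4 * T.ncard + (1+r) * T.ncard := by ring
  have hexp2 : (1+r) * (2 * kap T) = 2 * ((1+r) * kap T) := by ring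
  constructor
  · omega
  · intro heq
    have hTkap : T.ncard = 2 * kap T := by
      have : (1+r) * T.ncard = (1+r) * (2 * kap T) := by omega
      exact Nat.eq_of_mul_eq_mul_left (by omega) this
    exact h2keq hTkap

section Backward

variable (H : AddSubgroup G)

lemma quot_mem_iff (A : Set G) (g : G)
    (hA : A = (H : Set G) ∪ ({g} + (H : Set G))) (a : G) :
    a ∈ A ↔ ((a : G ⧸ H) = 0 ∨ (a : G ⧸ H) = (g : G ⧸ H)) := by
  rw [hA]
  constructor
  · rintro (h | h)
    · exact Or.inl ((QuotientAddGroup.eq_zero_iff a).2 h)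
    · right
      obtain ⟨x, hx, b, hb, rfl⟩ := Set.mem_add.1 h
      rw [Set.mem_singleton_iff] at hx
      subst hx
      have : ((b : G) : G ⧸ H) = 0 := (QuotientAddGroup.eq_zero_iff b).2 hb
      rw [QuotientAddGroup.mk_add, this, add_zero]
  · rintro (h | h)
    · exact Or.inl ((QuotientAddGroup.eq_zero_iff a).1 h)
    · right
      have hd : ((a - g : G) : G ⧸ H) = 0 := by
        rw [QuotientAddGroup.mk_sub, h, sub_self]
      have hd' : a - g ∈ H := (QuotientAddGroup.eq_zero_iff _).1 hd
      exact Set.mem_add.2 ⟨g, rfl, a - g, hd', by abel⟩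

lemma iter_mem_iff (A : Set G) (g : G)
    (hA : A = (H : Set G) ∪ ({g} + (H : Set G))) :
    ∀ n, ∀ x : G, x ∈ iterSum A (n+1) ↔ ∃ i ≤ n+1, (x : G ⧸ H) = i • (g : G ⧸ H) := by
  have h0A : (0:G) ∈ A := hA ▸ Or.inl H.zero_mem
  have hgA : g ∈ A := (quot_mem_iff H A g hA g).2 (Or.inr rfl)
  intro n
  induction n with
  | zero =>
    intro x
    rw [iterSum_one, quot_mem_iff H A g hA x]
    constructor
    · rintro (h | h)
      · exact ⟨0, by omega, by simpa using h⟩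
      · exact ⟨1, by omega, by simpa using h⟩
    · rintro ⟨i, hi, hx⟩
      interval_cases i
      · exact Or.inl (by simpa using hx)
      · exact Or.inr (by simpa using hx)
  | succ n ih =>
    intro x
    constructor
    · intro hx
      obtain ⟨y, hy, a, ha, rfl⟩ := Set.mem_add.1 hx
      obtain ⟨i, hi, hyq⟩ := (ih y).1 hy
      rcases (quot_mem_iff H A g hA a).1 ha with h' | h'
      · exact ⟨i, by omega, by rw [QuotientAddGroup.mk_add, hyq, h', add_zero]⟩
      · refine ⟨i+1, by omega, ?_⟩
        rw [QuotientAddGroup.mk_add, hyq, h', succ_nsmul]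
    · rintro ⟨i, hi, hxq⟩
      rcases Nat.lt_or_ge i (n+2) with h' | h'
      · exact iterSum_subset_succ h0A _ ((ih x).2 ⟨i, by omega, hxq⟩)
      · have hieq : i = n+2 := by omega
        subst hieq
        have hy : ((x - g : G) : G ⧸ H) = (n+1) • (g : G ⧸ H) := by
          rw [QuotientAddGroup.mk_sub, hxq, show n+2 = (n+1)+1 from rfl, succ_nsmul]
          abel
        have hxy : x - g ∈ iterSum A (n+1) := (ih _).2 ⟨n+1, le_refl _, hy⟩
        have hmem : (x - g) + g ∈ iterSum A (n+1) + A :=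
          Set.mem_add.2 ⟨_, hxy, g, hgA, rfl⟩
        exact (by simpa using hmem : x ∈ iterSum A (n+1) + A)

end Backward

lemma order_g (H : AddSubgroup G) (g : G) (r : ℕ)
    (hq : Nat.card (G ⧸ H) = 4 + r + 1)
    (hgen : AddSubgroup.closure {((g : G ⧸ H))} = ⊤) :
    addOrderOf ((g : G ⧸ H)) = 5 + r := by
  have hzm : AddSubgroup.zmultiples ((g : G ⧸ H)) = ⊤ := by
    rw [AddSubgroup.zmultiples_eq_closure]; exact hgen
  have h1 : Nat.card (AddSubgroup.zmultiples ((g : G ⧸ H))) = addOrderOf ((g : G ⧸ H)) :=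
    Nat.card_zmultiples _
  have h2 : Nat.card (AddSubgroup.zmultiples ((g : G ⧸ H))) = Nat.card (G ⧸ H) := by
    rw [hzm]
    exact Nat.card_congr AddSubgroup.topEquiv.toEquiv
  omega

lemma backward_dir (r : ℕ) (A : Set G) (H : AddSubgroup G) (g : G)
    (hA : A = (H : Set G) ∪ ({g} + (H : Set G)))
    (hq : Nat.card (G ⧸ H) = 4 + r + 1)
    (hgen : AddSubgroup.closure {((g : G ⧸ H))} = ⊤) :
    (AddSubgroup.closure A = ⊤) ∧
      iterSum (insert 0 A) (3+r) ≠ Set.univ ∧ iterSum (insert 0 A) (4+r) = Set.univ ∧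
      (4+r+1) * A.ncard = 2 * Nat.card G := by
  have h0A : (0:G) ∈ A := hA ▸ Or.inl H.zero_mem
  have hins : insert (0:G) A = A := Set.insert_eq_self.2 h0A
  have horder := order_g H g r hq hgen
  have hgq : (g : G ⧸ H) ≠ 0 := by
    intro h
    have : addOrderOf ((g : G ⧸ H)) = 1 := by rw [h]; exact addOrderOf_zero
    omega
  have hgH : g ∉ H := fun h => hgq ((QuotientAddGroup.eq_zero_iff g).2 h)
  have hiter := iter_mem_iff H A g hA
  -- S_{3+r} ≠ univ
  have hneS : iterSum A (3+r) ≠ Set.univ := by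
    intro huniv
    obtain ⟨x, hx⟩ := QuotientAddGroup.mk'_surjective H ((4+r) • (g : G ⧸ H))
    have hx' : x ∈ iterSum A ((2+r)+1) := by
      rw [show (2+r)+1 = 3+r by omega, huniv]; trivial
    obtain ⟨i, hi, hq'⟩ := (hiter (2+r) x).1 hx'
    have hxq : (x : G ⧸ H) = (4+r) • (g : G ⧸ H) := hx
    have hd : ((4+r) - i) • (g : G ⧸ H) = 0 := by
      have : i • (g : G ⧸ H) + ((4+r) - i) • (g : G ⧸ H) = i • (g : G ⧸ H) + 0 := by
        rw [← add_nsmul, add_zero, show i + ((4+r) - i) = 4+r by omega, ← hxq, hq']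
      exact add_left_cancel this
    have hdvd : addOrderOf ((g : G ⧸ H)) ∣ (4+r) - i :=
      addOrderOf_dvd_iff_nsmul_eq_zero.2 hd
    rw [horder] at hdvd
    have hpos : 0 < (4+r) - i := by omega
    have := Nat.le_of_dvd hpos hdvd
    omega
  -- S_{4+r} = univ
  have hfull : iterSum A (4+r) = Set.univ := by
    rw [show 4+r = (3+r)+1 by omega]
    apply Set.eq_univ_of_forall
    intro x
    have hxtop : (x : G ⧸ H) ∈ AddSubgroup.zmultiples ((g : G ⧸ H)) := by
      rw [AddSubgroup.zmultiples_eq_closure, hgen]; trivial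
    obtain ⟨k, hk⟩ := AddSubgroup.mem_zmultiples_iff.1 hxtop
    set m : ℤ := ((5+r : ℕ) : ℤ) with hm
    have hmpos : (0:ℤ) < m := by positivity
    set i : ℕ := (k % m).toNat with hi
    have hknn : 0 ≤ k % m := Int.emod_nonneg k (by omega)
    have hklt : k % m < m := Int.emod_lt_of_pos k hmpos
    have hile : i ≤ 3+r+1 := by
      have : (i : ℤ) = k % m := Int.toNat_of_nonneg hknn
      omega
    have hord0 : ((5+r : ℕ) : ℤ) • (g : G ⧸ H) = 0 := by
      rw [natCast_zsmul, ← horder]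
      exact addOrderOf_nsmul_eq_zero _
    have hsm : (x : G ⧸ H) = i • (g : G ⧸ H) := by
      have hdecomp : k = m * (k / m) + k % m := (Int.mul_ediv_add_emod k m).symm
      have hsplit : k • (g : G ⧸ H) = (k % m) • (g : G ⧸ H) := by
        conv_lhs => rw [hdecomp]
        rw [mul_comm m (k/m), add_zsmul, mul_zsmul, hm, hord0, smul_zero, zero_add]
      rw [← hk, hsplit, ← Int.toNat_of_nonneg hknn, natCast_zsmul]
    exact (hiter (3+r) x).2 ⟨i, hile, hsm⟩
  -- Spans
  have hspan : AddSubgroup.closure A = ⊤ := by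
    set N := AddSubgroup.closure A with hN
    have hHN : ∀ y ∈ H, y ∈ N := fun y hy =>
      AddSubgroup.subset_closure (hA ▸ Or.inl hy)
    have hgN : g ∈ N := AddSubgroup.subset_closure
      (hA ▸ Or.inr (Set.mem_add.2 ⟨g, rfl, 0, H.zero_mem, add_zero g⟩))
    have hmap : AddSubgroup.map (QuotientAddGroup.mk' H) N = ⊤ := by
      rw [eq_top_iff, ← hgen]
      apply (AddSubgroup.closure_le _).2
      rintro y hy
      rw [Set.mem_singleton_iff] at hy
      subst hy
      exact ⟨g, hgN, rfl⟩
    rw [eq_top_iff]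
    intro x _
    have hxm : (QuotientAddGroup.mk' H) x ∈ AddSubgroup.map (QuotientAddGroup.mk' H) N := by
      rw [hmap]; trivial
    obtain ⟨y, hy, hyx⟩ := hxm
    have hxy : x - y ∈ H := by
      rw [← QuotientAddGroup.eq_zero_iff, QuotientAddGroup.mk_sub]
      show (x : G ⧸ H) - (y : G ⧸ H) = 0
      rw [show ((y : G) : G ⧸ H) = (x : G ⧸ H) from hyx, sub_self]
    have : x = y + (x - y) := by abel
    rw [this]
    exact N.add_mem hy (hHN _ hxy)
  -- cardinalities
  have hdisj : Disjoint (H : Set G) ({g} + (H : Set G)) := by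
    rw [Set.disjoint_left]
    rintro x hxH hxC
    obtain ⟨a, ha, b, hb, rfl⟩ := Set.mem_add.1 hxC
    rw [Set.mem_singleton_iff] at ha
    subst ha
    exact hgH (by simpa using AddSubgroup.sub_mem H hxH hb)
  have hcg : ({g} + (H : Set G)).ncard = (H : Set G).ncard := by
    rw [Set.singleton_add]
    exact Set.ncard_image_of_injective _ (add_right_injective g)
  have hAcard : A.ncard = 2 * (H : Set G).ncard := by
    rw [hA, Set.ncard_union_eq hdisj (Set.toFinite _) (Set.toFinite _), hcg]
    ring
  have hHcard : Nat.card H = (H : Set G).ncard := by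
    rw [← Nat.card_coe_set_eq]
    rfl
  have hLag : Nat.card G = Nat.card (G ⧸ H) * Nat.card H :=
    AddSubgroup.card_eq_card_quotient_mul_card_addSubgroup H
  rw [hins]
  refine ⟨hspan, hneS, hfull, ?_⟩
  rw [hAcard, hLag, hq, hHcard]
  ring

end KL

end KL

theorem stmt17 (G : Type*) [AddCommGroup G] [Finite G] (ρ : ℕ) (hρ : 4 ≤ ρ) :
    (∀ A : Set G, Spans A → ρ ≤ diamPlus A → (ρ + 1) * A.ncard ≤ 2 * Nat.card G) ∧
      ∀ A : Set G,
        (Spans A ∧ ρ ≤ diamPlus A ∧ (ρ + 1) * A.ncard = 2 * Nat.card G) ↔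
          ∃ (H : AddSubgroup G) (g : G),
            A = (H : Set G) ∪ ({g} + (H : Set G)) ∧
            Nat.card (G ⧸ H) = ρ + 1 ∧
            AddSubgroup.closure {((g : G ⧸ H))} = ⊤ := by
  obtain ⟨r, rfl⟩ : ∃ r, ρ = 4 + r := ⟨ρ - 4, by omega⟩
  have hins_mem : ∀ A : Set G, (0:G) ∈ insert (0:G) A := fun A => Set.mem_insert 0 A
  constructor
  · -- Part 1: the bound
    intro A hspan hdiam
    have hspan' : AddSubgroup.closure A = ⊤ := hspan
    have hclos : AddSubgroup.closure (insert (0:G) A) = ⊤ := by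
      apply le_antisymm le_top
      rw [← hspan']
      exact AddSubgroup.closure_mono (Set.subset_insert 0 A)
    have hne : iterSum (insert (0:G) A) (3+r) ≠ Set.univ := by
      intro h
      have hmem : ((3+r : ℕ)) ∈ {n : ℕ | iterSum (insert (0:G) A) n = Set.univ} := h
      have hle : diamPlus A ≤ 3+r := Nat.sInf_le hmem
      omega
    have hmain := (KL.main_bound r (insert (0:G) A) (hins_mem A) hclos hne).1
    have hAT : A.ncard ≤ (insert (0:G) A).ncard :=
      Set.ncard_le_ncard (Set.subset_insert 0 A) (Set.toFinite _)
    calc (4+r+1) * A.ncard = (5+r) * A.ncard := by ring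
    _ ≤ (5+r) * (insert (0:G) A).ncard := Nat.mul_le_mul_left _ hAT
    _ ≤ 2 * Nat.card G := hmain
  · -- Part 2: equality characterisation
    intro A
    constructor
    · rintro ⟨hspan, hdiam, heq⟩
      have hspan' : AddSubgroup.closure A = ⊤ := hspan
      have hclos : AddSubgroup.closure (insert (0:G) A) = ⊤ := by
        apply le_antisymm le_top
        rw [← hspan']
        exact AddSubgroup.closure_mono (Set.subset_insert 0 A)
      have hne : iterSum (insert (0:G) A) (3+r) ≠ Set.univ := by
        intro h
        have hmem : ((3+r : ℕ)) ∈ {n : ℕ | iterSum (insert (0:G) A) n = Set.univ} := h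
        have hle : diamPlus A ≤ 3+r := Nat.sInf_le hmem
        omega
      have hmain := KL.main_bound r (insert (0:G) A) (hins_mem A) hclos hne
      have hAT : A.ncard ≤ (insert (0:G) A).ncard :=
        Set.ncard_le_ncard (Set.subset_insert 0 A) (Set.toFinite _)
      have heq' : (5+r) * A.ncard = 2 * Nat.card G := by
        rw [← heq]; ring
      have hle1 : (5+r) * A.ncard ≤ (5+r) * (insert (0:G) A).ncard :=
        Nat.mul_le_mul_left _ hAT
      have hTeq : (5+r) * (insert (0:G) A).ncard = 2 * Nat.card G :=
        le_antisymm hmain.1 (by omega)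
      obtain ⟨H, g, hgH, hTun, hT2⟩ := hmain.2 hTeq
      have hcardeq : A.ncard = (insert (0:G) A).ncard :=
        Nat.eq_of_mul_eq_mul_left (show 0 < 5+r by omega) (by omega)
      have hAeqT : A = insert (0:G) A :=
        Set.eq_of_subset_of_ncard_le (Set.subset_insert 0 A)
          (le_of_eq hcardeq.symm) (Set.toFinite _)
      have hAun : A = (H : Set G) ∪ ({g} + (H : Set G)) := by rw [hAeqT]; exact hTun
      refine ⟨H, g, hAun, ?_, ?_⟩
      · -- cardinality of the quotient
        have hHcard : Nat.card H = (H : Set G).ncard := by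
          rw [← Nat.card_coe_set_eq]
          rfl
        have hLag := AddSubgroup.card_eq_card_quotient_mul_card_addSubgroup H
        have hHpos : 0 < (H : Set G).ncard :=
          (Set.ncard_pos (Set.toFinite _)).2 ⟨0, H.zero_mem⟩
        have hNG : Nat.card G = (5+r) * (H : Set G).ncard := by
          have h1 : (5+r) * (insert (0:G) A).ncard = (5+r) * (2 * (H : Set G).ncard) := by
            rw [← hT2]
          have h2 : (5+r) * (2 * (H : Set G).ncard) = 2 * ((5+r) * (H : Set G).ncard) := by
            ring
          have h3 : 2 * Nat.card G = 2 * ((5+r) * (H : Set G).ncard) := by omega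
          omega
        have hq' : Nat.card (G ⧸ H) * (H : Set G).ncard = (5+r) * (H : Set G).ncard := by
          rw [← hHcard, ← hLag]
          rw [hNG, hHcard]
        have := Nat.eq_of_mul_eq_mul_right hHpos hq'
        omega
      · -- the quotient is generated by g
        set π := QuotientAddGroup.mk' H with hπ
        have himH : π '' (H : Set G) = {(0 : G ⧸ H)} := by
          ext y
          constructor
          · rintro ⟨x, hx, rfl⟩
            exact (QuotientAddGroup.eq_zero_iff x).2 hx
          · rintro hy
            rw [Set.mem_singleton_iff] at hy
            exact ⟨0, H.zero_mem, by rw [hy]; exact map_zero π⟩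
        have himC : π '' ({g} + (H : Set G)) = {((g : G ⧸ H))} := by
          ext y
          constructor
          · rintro ⟨x, hx, rfl⟩
            obtain ⟨a, ha, b, hb, rfl⟩ := Set.mem_add.1 hx
            rw [Set.mem_singleton_iff] at ha
            subst ha
            rw [Set.mem_singleton_iff]
            have hb0 : π b = 0 := (QuotientAddGroup.eq_zero_iff b).2 hb
            show π (a + b) = _
            rw [map_add, hb0, add_zero]
            rfl
          · rintro hy
            rw [Set.mem_singleton_iff] at hy
            refine ⟨g, Set.mem_add.2 ⟨g, rfl, 0, H.zero_mem, add_zero g⟩, ?_⟩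
            rw [hy]
            rfl
        have hcl : AddSubgroup.closure ({(0 : G ⧸ H)} ∪ {((g : G ⧸ H))}) =
            AddSubgroup.closure {((g : G ⧸ H))} := by
          apply le_antisymm
          · apply (AddSubgroup.closure_le _).2
            rintro y (hy | hy)
            · rw [Set.mem_singleton_iff] at hy
              rw [hy]
              exact AddSubgroup.zero_mem _
            · exact AddSubgroup.subset_closure hy
          · exact AddSubgroup.closure_mono Set.subset_union_right
        calc AddSubgroup.closure {((g : G ⧸ H))}
            = AddSubgroup.closure (π '' A) := by
              rw [hAun, Set.image_union, himH, himC, hcl]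
        _ = AddSubgroup.map π (AddSubgroup.closure A) := (AddMonoidHom.map_closure π A).symm
        _ = AddSubgroup.map π ⊤ := by rw [hspan']
        _ = ⊤ := AddSubgroup.map_top_of_surjective π (QuotientAddGroup.mk'_surjective H)
    · rintro ⟨H, g, hA, hq, hgen⟩
      obtain ⟨hspan, hneS, hfull, hcard⟩ := KL.backward_dir r A H g hA hq hgen
      refine ⟨hspan, ?_, hcard⟩
      by_contra hc
      push_neg at hc
      have hfull' : (4+r) ∈ {n : ℕ | iterSum (insert (0:G) A) n = Set.univ} := hfull
      have hs : diamPlus A ∈ {n : ℕ | iterSum (insert (0:G) A) n = Set.univ} :=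
        Nat.sInf_mem ⟨4+r, hfull'⟩
      have hsub : iterSum (insert (0:G) A) (diamPlus A) ⊆ iterSum (insert (0:G) A) (3+r) :=
        KL.iterSum_mono (hins_mem A) (by omega)
      apply hneS
      apply Set.eq_univ_of_univ_subset
      calc Set.univ = iterSum (insert (0:G) A) (diamPlus A) := hs.symm
      _ ⊆ iterSum (insert (0:G) A) (3+r) := hsub
end
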